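/- arXiv:2007.02281 — 5 statements merged into one kernel-verified Lean document; each statement's English description precedes it below -/
import Mathlib

section
/- Let ξ₁,…,ξₙ be independent ℤ₊-valued random variables such that, for each i, there is a real sequence (g_{i,k})_{k≥1} with (j+1)·P(ξᵢ = j+1) = ∑_{k=0}^{j} g_{i,j−k+1}·P(ξᵢ = k) for every j ∈ ℤ₊. Then the sum Wₙ = ξ₁ + ⋯ + ξₙ satisfies, for every j ∈ ℤ₊, (j+1)·P(Wₙ = j+1) = ∑_{i=1}^{n} ∑_{k=0}^{j} g_{i,j−k+1}·P(Wₙ = k). -/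
open MeasureTheory ProbabilityTheory Finset

/-- `pm P X j` is the probability `P(X = j)` as a real number. -/
noncomputable def pm {Ω : Type*} [MeasurableSpace Ω] (P : Measure Ω) (X : Ω → ℕ) (j : ℕ) : ℝ :=
  (P {ω | X ω = j}).toReal

/-- Pure algebra half of the convolution argument. -/
lemma conv_half (pX pY pZ a : ℕ → ℝ) (j : ℕ)
    (hZ : ∀ s, pZ s = ∑ m ∈ Finset.range (s + 1), pX m * pY (s - m))
    (hX : ∀ t : ℕ, ((t : ℝ) + 1) * pX (t + 1) =
      ∑ k ∈ Finset.range (t + 1), a (t - k + 1) * pX k) :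
    ∑ t ∈ Finset.range (j + 1), ((t : ℝ) + 1) * pX (t + 1) * pY (j - t)
      = ∑ s ∈ Finset.range (j + 1), a (j - s + 1) * pZ s := by
  have lhs : ∑ t ∈ Finset.range (j + 1), ((t : ℝ) + 1) * pX (t + 1) * pY (j - t)
      = ∑ t ∈ Finset.range (j + 1), ∑ k ∈ Finset.range (t + 1),
          a (t - k + 1) * pX k * pY (j - t) := by
    refine Finset.sum_congr rfl fun t _ => ?_
    rw [hX t, Finset.sum_mul]
  have rhs : ∑ s ∈ Finset.range (j + 1), a (j - s + 1) * pZ s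
      = ∑ s ∈ Finset.range (j + 1), ∑ k ∈ Finset.range (s + 1),
          a (j - s + 1) * (pX k * pY (s - k)) := by
    refine Finset.sum_congr rfl fun s _ => ?_
    rw [hZ s, Finset.mul_sum]
  rw [lhs, rhs, Finset.sum_sigma', Finset.sum_sigma']
  refine Finset.sum_nbij' (fun p => ⟨j - p.1 + p.2, p.2⟩) (fun p => ⟨j - p.1 + p.2, p.2⟩)
    ?_ ?_ ?_ ?_ ?_
  · rintro ⟨t, k⟩ hp
    simp only [Finset.mem_sigma, Finset.mem_range] at hp ⊢
    omega
  · rintro ⟨s, k⟩ hp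
    simp only [Finset.mem_sigma, Finset.mem_range] at hp ⊢
    omega
  · rintro ⟨t, k⟩ hp
    simp only [Finset.mem_sigma, Finset.mem_range] at hp
    simp only [Sigma.mk.inj_iff]
    constructor
    · omega
    · exact HEq.rfl
  · rintro ⟨s, k⟩ hp
    simp only [Finset.mem_sigma, Finset.mem_range] at hp
    simp only [Sigma.mk.inj_iff]
    constructor
    · omega
    · exact HEq.rfl
  · rintro ⟨t, k⟩ hp
    simp only [Finset.mem_sigma, Finset.mem_range] at hp
    have h1 : j - (j - t + k) + 1 = t - k + 1 := by omega
    have h2 : (j - t + k) - k = j - t := by omega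
    simp only [h1, h2]
    ring

/-- Convolution formula for the PMF of a sum of two independent variables. -/
lemma pm_add_eq {Ω : Type*} [MeasurableSpace Ω] (P : Measure Ω) [IsProbabilityMeasure P]
    (X Y : Ω → ℕ) (hX : Measurable X) (hY : Measurable Y) (h : IndepFun X Y P) (s : ℕ) :
    pm P (fun ω => X ω + Y ω) s = ∑ m ∈ Finset.range (s + 1), pm P X m * pm P Y (s - m) := by
  have hset : {ω | X ω + Y ω = s}
      = ⋃ m ∈ Finset.range (s + 1), ({ω | X ω = m} ∩ {ω | Y ω = s - m}) := by
    ext ω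
    simp only [Set.mem_setOf_eq, Set.mem_iUnion, Set.mem_inter_iff, Finset.mem_range]
    constructor
    · intro hs
      exact ⟨X ω, by omega, rfl, by omega⟩
    · rintro ⟨m, hm, h1, h2⟩
      omega
  have hmeasset : ∀ m : ℕ, MeasurableSet ({ω | X ω = m} ∩ {ω | Y ω = s - m}) := fun m =>
    (hX (measurableSet_singleton m)).inter (hY (measurableSet_singleton (s - m)))
  have hdisj : Set.PairwiseDisjoint (↑(Finset.range (s + 1)))
      (fun m => {ω | X ω = m} ∩ {ω | Y ω = s - m}) := by
    intro m _ m' _ hmm'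
    refine Set.disjoint_left.2 ?_
    rintro ω ⟨h1, _⟩ ⟨h1', _⟩
    exact hmm' (h1 ▸ h1')
  have := measure_biUnion_finset (μ := P) hdisj (fun m _ => hmeasset m)
  unfold pm
  rw [hset, this, ENNReal.toReal_sum (fun m _ => measure_ne_top P _)]
  refine Finset.sum_congr rfl fun m _ => ?_
  have : P ({ω | X ω = m} ∩ {ω | Y ω = s - m}) = P {ω | X ω = m} * P {ω | Y ω = s - m} := by
    have := h.measure_inter_preimage_eq_mul {m} {s - m}
      (measurableSet_singleton m) (measurableSet_singleton (s - m))
    simpa [Set.preimage, Set.mem_singleton_iff] using this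
  rw [this, ENNReal.toReal_mul]

/-- The key two-variable step: the recursion is additive under independent sums. -/
lemma key_step {Ω : Type*} [MeasurableSpace Ω] (P : Measure Ω) [IsProbabilityMeasure P]
    (X Y : Ω → ℕ) (hXm : Measurable X) (hYm : Measurable Y) (h : IndepFun X Y P)
    (a b : ℕ → ℝ)
    (ha : ∀ t : ℕ, ((t : ℝ) + 1) * pm P X (t + 1) =
      ∑ k ∈ Finset.range (t + 1), a (t - k + 1) * pm P X k)
    (hb : ∀ t : ℕ, ((t : ℝ) + 1) * pm P Y (t + 1) =
      ∑ k ∈ Finset.range (t + 1), b (t - k + 1) * pm P Y k)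
    (j : ℕ) :
    ((j : ℝ) + 1) * pm P (fun ω => X ω + Y ω) (j + 1) =
      ∑ k ∈ Finset.range (j + 1),
        (a (j - k + 1) + b (j - k + 1)) * pm P (fun ω => X ω + Y ω) k := by
  set pX := pm P X with hpX
  set pY := pm P Y with hpY
  set pZ := pm P (fun ω => X ω + Y ω) with hpZ
  have hZ : ∀ s, pZ s = ∑ m ∈ Finset.range (s + 1), pX m * pY (s - m) :=
    pm_add_eq P X Y hXm hYm h
  have hZ' : ∀ s, pZ s = ∑ m ∈ Finset.range (s + 1), pY m * pX (s - m) := by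
    intro s
    have hcomm : (fun ω => X ω + Y ω) = (fun ω => Y ω + X ω) := by
      funext ω; omega
    have : pZ = pm P (fun ω => Y ω + X ω) := by rw [hpZ, hcomm]
    rw [this]
    exact pm_add_eq P Y X hYm hXm h.symm s
  have step1 : ((j : ℝ) + 1) * pZ (j + 1)
      = ∑ m ∈ Finset.range (j + 2), ((m : ℝ) * (pX m * pY (j + 1 - m))
          + ((j + 1 - m : ℕ) : ℝ) * (pX m * pY (j + 1 - m))) := by
    rw [hZ (j + 1), Finset.mul_sum]
    refine Finset.sum_congr rfl fun m hm => ?_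
    rw [Finset.mem_range] at hm
    have : ((j : ℝ) + 1) = (m : ℝ) + ((j + 1 - m : ℕ) : ℝ) := by
      have : (j + 1 - m : ℕ) = j + 1 - m := rfl
      push_cast [Nat.cast_sub (by omega : m ≤ j + 1)]
      ring
    rw [this, add_mul]
  have S1 : ∑ m ∈ Finset.range (j + 2), (m : ℝ) * (pX m * pY (j + 1 - m))
      = ∑ s ∈ Finset.range (j + 1), a (j - s + 1) * pZ s := by
    rw [Finset.sum_range_succ']
    simp only [Nat.cast_zero, zero_mul, add_zero]
    rw [← conv_half pX pY pZ a j hZ ha]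
    refine Finset.sum_congr rfl fun t ht => ?_
    rw [Finset.mem_range] at ht
    have : j + 1 - (t + 1) = j - t := by omega
    rw [this]
    push_cast
    ring
  have S2 : ∑ m ∈ Finset.range (j + 2), ((j + 1 - m : ℕ) : ℝ) * (pX m * pY (j + 1 - m))
      = ∑ s ∈ Finset.range (j + 1), b (j - s + 1) * pZ s := by
    have hrefl : ∑ m ∈ Finset.range (j + 2), ((j + 1 - m : ℕ) : ℝ) * (pX m * pY (j + 1 - m))
        = ∑ m ∈ Finset.range (j + 2), (m : ℝ) * (pY m * pX (j + 1 - m)) := by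
      rw [← Finset.sum_range_reflect (fun m => ((j + 1 - m : ℕ) : ℝ) * (pX m * pY (j + 1 - m)))
        (j + 2)]
      refine Finset.sum_congr rfl fun m hm => ?_
      rw [Finset.mem_range] at hm
      have h1 : j + 2 - 1 - m = j + 1 - m := by omega
      have h2 : j + 1 - (j + 1 - m) = m := by omega
      rw [h1, h2]
      ring
    rw [hrefl, Finset.sum_range_succ']
    simp only [Nat.cast_zero, zero_mul, add_zero]
    rw [← conv_half pY pX pZ b j hZ' hb]
    refine Finset.sum_congr rfl fun t ht => ?_
    rw [Finset.mem_range] at ht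
    have : j + 1 - (t + 1) = j - t := by omega
    rw [this]
    push_cast
    ring
  rw [step1, Finset.sum_add_distrib, S1, S2, ← Finset.sum_add_distrib]
  refine Finset.sum_congr rfl fun k _ => ?_
  ring

/-- The PMF recursion for a sum of independent `ℕ`-valued random variables, each satisfying
the coefficient-level logarithmic-PGF recursion (Proposition 3.1, PMF form). -/
theorem sum_pmf_recursion {Ω : Type*} [MeasurableSpace Ω] (P : Measure Ω)
    [IsProbabilityMeasure P] (n : ℕ) (ξ : Fin n → Ω → ℕ) (hmeas : ∀ i, Measurable (ξ i))
    (hindep : iIndepFun ξ P)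
    (g : Fin n → ℕ → ℝ)
    (hrec : ∀ i, ∀ j : ℕ, ((j : ℝ) + 1) * pm P (ξ i) (j + 1) =
      ∑ k ∈ Finset.range (j + 1), g i (j - k + 1) * pm P (ξ i) k)
    (j : ℕ) :
    ((j : ℝ) + 1) * pm P (fun ω => ∑ i, ξ i ω) (j + 1) =
      ∑ i, ∑ k ∈ Finset.range (j + 1), g i (j - k + 1) * pm P (fun ω => ∑ i, ξ i ω) k := by
  classical
  suffices H : ∀ s : Finset (Fin n), ∀ j : ℕ,
      ((j : ℝ) + 1) * pm P (fun ω => ∑ i ∈ s, ξ i ω) (j + 1) =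
        ∑ i ∈ s, ∑ k ∈ Finset.range (j + 1),
          g i (j - k + 1) * pm P (fun ω => ∑ i ∈ s, ξ i ω) k by
    exact H Finset.univ j
  intro s
  induction s using Finset.induction_on with
  | empty =>
    intro j
    have : pm P (fun ω => ∑ i ∈ (∅ : Finset (Fin n)), ξ i ω) (j + 1) = 0 := by
      unfold pm
      have : {ω : Ω | ∑ i ∈ (∅ : Finset (Fin n)), ξ i ω = j + 1} = ∅ := by
        ext ω; simp
      rw [this]
      simp
    simp only [Finset.sum_empty] at this ⊢
    rw [this, mul_zero]
  | @insert a s ha ih =>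
    intro j
    have hYm : Measurable (fun ω => ∑ i ∈ s, ξ i ω) := by
      exact Finset.measurable_sum s fun i _ => hmeas i
    have hindepa : IndepFun (ξ a) (fun ω => ∑ i ∈ s, ξ i ω) P := by
      have := (hindep.indepFun_finsetSum_of_notMem hmeas ha).symm
      have heq : (∑ i ∈ s, ξ i) = fun ω => ∑ i ∈ s, ξ i ω := by
        funext ω; simp [Finset.sum_apply]
      rwa [heq] at this
    have hb : ∀ t : ℕ, ((t : ℝ) + 1) * pm P (fun ω => ∑ i ∈ s, ξ i ω) (t + 1) =
        ∑ k ∈ Finset.range (t + 1),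
          (∑ i ∈ s, g i (t - k + 1)) * pm P (fun ω => ∑ i ∈ s, ξ i ω) k := by
      intro t
      rw [ih t, Finset.sum_comm]
      exact Finset.sum_congr rfl fun k _ => (Finset.sum_mul _ _ _).symm
    have hfun : (fun ω => ∑ i ∈ insert a s, ξ i ω)
        = fun ω => ξ a ω + ∑ i ∈ s, ξ i ω := by
      funext ω; rw [Finset.sum_insert ha]
    rw [hfun]
    have := key_step P (ξ a) (fun ω => ∑ i ∈ s, ξ i ω) (hmeas a) hYm hindepa
      (g a) (fun m => ∑ i ∈ s, g i m) (hrec a) hb j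
    rw [this, Finset.sum_insert ha]
    simp_rw [add_mul, Finset.sum_mul]
    rw [Finset.sum_add_distrib, Finset.sum_comm]
end

section
/- Let ξ₁,…,ξₙ be independent ℤ₊-valued random variables such that, for each i, there is a real sequence (g_{i,k})_{k≥1} with ∑_{k≥1} |g_{i,k}| < ∞ and (j+1)·P(ξᵢ = j+1) = ∑_{k=0}^{j} g_{i,j−k+1}·P(ξᵢ = k) for every j ∈ ℤ₊, and suppose Wₙ = ξ₁ + ⋯ + ξₙ has finite mean. Then for every bounded function h : ℤ₊ → ℝ, E[ ∑_{i=1}^{n} ∑_{k=0}^{∞} g_{i,k+1}·h(Wₙ + k + 1) ] = E[ Wₙ·h(Wₙ) ]. Equivalently, the operator 𝒜 h(j) = ∑_{i=1}^{n} ∑_{k=0}^{∞} g_{i,k+1} h(j+k+1) − j·h(j) satisfies E[𝒜 h(Wₙ)] = 0. -/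
open MeasureTheory ProbabilityTheory Finset

lemma pm_nonneg {Ω : Type*} [MeasurableSpace Ω] (P : Measure Ω) (X : Ω → ℕ) (j : ℕ) :
    0 ≤ pm P X j := ENNReal.toReal_nonneg

lemma pm_summable {Ω : Type*} [MeasurableSpace Ω] (P : Measure Ω) [IsProbabilityMeasure P]
    (X : Ω → ℕ) (hX : Measurable X) : Summable (pm P X) := by
  apply ENNReal.summable_toReal
  have hdis : Pairwise (Function.onFun Disjoint fun a : ℕ => X ⁻¹' {a}) := by
    intro a b hab
    exact Disjoint.preimage X (by simp [hab])
  have : (∑' a : ℕ, P (X ⁻¹' {a})) = P (⋃ a, X ⁻¹' {a}) :=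
    (measure_iUnion hdis fun a => hX (measurableSet_singleton a)).symm
  have heq : ∀ a : ℕ, {ω | X ω = a} = X ⁻¹' {a} := fun a => rfl
  simp_rw [heq]
  rw [this]
  exact ne_of_lt (lt_of_le_of_lt (prob_le_one) (by norm_num))

lemma pair_integral {Ω : Type*} [MeasurableSpace Ω] (P : Measure Ω) [IsProbabilityMeasure P]
    (X Y : Ω → ℕ) (hX : Measurable X) (hY : Measurable Y) (hXY : IndepFun X Y P)
    (f : ℕ × ℕ → ℝ) (hint : Integrable (fun ω => f (X ω, Y ω)) P) :
    ∫ ω, f (X ω, Y ω) ∂P = ∑' ab : ℕ × ℕ, pm P X ab.1 * pm P Y ab.2 * f ab := by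
  have hm : Measurable fun ω => (X ω, Y ω) := hX.prodMk hY
  have hf : Measurable f := measurable_of_countable f
  have hmap : P.map (fun ω => (X ω, Y ω)) = (P.map X).prod (P.map Y) :=
    (indepFun_iff_map_prod_eq_prod_map_map hX.aemeasurable hY.aemeasurable).mp hXY
  have hint' : Integrable f (P.map fun ω => (X ω, Y ω)) :=
    (integrable_map_measure hf.aestronglyMeasurable hm.aemeasurable).mpr hint
  have h1 : ∫ ω, f (X ω, Y ω) ∂P = ∫ p, f p ∂(P.map fun ω => (X ω, Y ω)) :=
    (integral_map hm.aemeasurable hf.aestronglyMeasurable).symm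
  rw [h1, integral_countable' hint']
  refine tsum_congr fun ab => ?_
  obtain ⟨a, b⟩ := ab
  rw [hmap, show ({(a, b)} : Set (ℕ × ℕ)) = {a} ×ˢ {b} from (Set.singleton_prod_singleton).symm,
    measureReal_def, Measure.prod_prod, ENNReal.toReal_mul,
    Measure.map_apply hX (measurableSet_singleton a),
    Measure.map_apply hY (measurableSet_singleton b)]
  simp only [pm, smul_eq_mul]
  rfl

set_option maxHeartbeats 1000000

lemma summable_id_mul (p : ℕ → ℝ) (hp0 : ∀ a, 0 ≤ p a) (hp : Summable p)
    (gg : ℕ → ℝ) (hg : Summable fun k => |gg (k + 1)|)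
    (hrec : ∀ j : ℕ, ((j : ℝ) + 1) * p (j + 1) =
      ∑ k ∈ Finset.range (j + 1), gg (j - k + 1) * p k) :
    Summable fun a : ℕ => (a : ℝ) * p a := by
  have hpn : Summable fun x => ‖p x‖ := by
    simpa only [Real.norm_eq_abs, abs_of_nonneg (hp0 _)] using hp
  have hgn : Summable fun x : ℕ => ‖gg (x + 1)‖ := by
    simpa only [Real.norm_eq_abs] using hg
  have hconv : Summable fun j : ℕ => ‖∑ k ∈ range (j + 1), p k * gg ((j - k) + 1)‖ :=
    summable_norm_sum_mul_range_of_summable_norm (f := p) (g := fun x => gg (x + 1)) hpn hgn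
  have hsum_eq : ∀ j : ℕ, ∑ k ∈ range (j + 1), p k * gg (j - k + 1)
      = ((j : ℝ) + 1) * p (j + 1) := by
    intro j
    rw [hrec j]
    exact Finset.sum_congr rfl fun k _ => mul_comm _ _
  have hs : Summable fun j : ℕ => ((j : ℝ) + 1) * p (j + 1) :=
    Summable.of_norm (hconv.congr fun j => by rw [hsum_eq j])
  have hs' : Summable fun j : ℕ => ((j + 1 : ℕ) : ℝ) * p (j + 1) :=
    hs.congr fun j => by push_cast; ring
  exact (summable_nat_add_iff 1).mp hs'

lemma core_identity (p : ℕ → ℝ) (hp0 : ∀ a, 0 ≤ p a) (hp : Summable p)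
    (gg : ℕ → ℝ) (hg : Summable fun k => |gg (k + 1)|)
    (hrec : ∀ j : ℕ, ((j : ℝ) + 1) * p (j + 1) =
      ∑ k ∈ Finset.range (j + 1), gg (j - k + 1) * p k)
    (h : ℕ → ℝ) (C : ℝ) (hC : ∀ j, |h j| ≤ C) (b : ℕ) :
    ∑' a : ℕ, (a : ℝ) * p a * h (a + b)
      = ∑' a : ℕ, p a * ∑' l : ℕ, gg (l + 1) * h (a + b + l + 1) := by
  set φ : ℕ × ℕ → ℕ × ℕ := fun kl => (kl.1 + kl.2, kl.1) with hφ_def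
  set u : ℕ × ℕ → ℝ := fun kl => p kl.1 * (gg (kl.2 + 1) * h (kl.1 + kl.2 + 1 + b)) with hu_def
  set v : ℕ × ℕ → ℝ := fun jk =>
    if jk.2 ≤ jk.1 then p jk.2 * (gg (jk.1 - jk.2 + 1) * h (jk.1 + 1 + b)) else 0 with hv_def
  have hφinj : Function.Injective φ := by
    intro x y hxy
    simp only [hφ_def, Prod.mk.injEq] at hxy
    obtain ⟨h1, h2⟩ := hxy
    ext <;> omega
  have huv : ∀ kl : ℕ × ℕ, v (φ kl) = u kl := by
    rintro ⟨k, l⟩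
    simp only [hφ_def, hv_def, hu_def]
    rw [if_pos (by omega), Nat.add_sub_cancel_left]
  have hvsupp0 : ∀ z ∉ Set.range φ, v z = 0 := by
    rintro ⟨j, k⟩ hz
    by_cases hk : k ≤ j
    · exfalso
      apply hz
      refine ⟨(k, j - k), ?_⟩
      have hjk : k + (j - k) = j := by omega
      simp only [hφ_def, Prod.mk.injEq]
      exact ⟨hjk, trivial⟩
    · simp only [hv_def]
      exact if_neg hk
  have hvsupp : Function.support v ⊆ Set.range φ := by
    intro z hzs
    by_contra hz
    exact hzs (hvsupp0 z hz)
  have hCnn : 0 ≤ C := le_trans (abs_nonneg _) (hC 0)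
  have hu_sum : Summable u := by
    apply Summable.of_norm_bounded (g := fun kl : ℕ × ℕ => p kl.1 * |gg (kl.2 + 1)| * C)
      ((hp.mul_of_nonneg hg hp0 fun _ => abs_nonneg _).mul_right C)
    rintro ⟨k, l⟩
    simp only [hu_def, norm_mul, Real.norm_eq_abs, abs_of_nonneg (hp0 k), abs_abs]
    calc p k * (|gg (l + 1)| * |h (k + l + 1 + b)|)
        ≤ p k * (|gg (l + 1)| * C) := by
          apply mul_le_mul_of_nonneg_left _ (hp0 k)
          exact mul_le_mul_of_nonneg_left (hC _) (abs_nonneg _)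
      _ = p k * |gg (l + 1)| * C := by ring
  have hv_sum : Summable v :=
    (Function.Injective.summable_iff hφinj hvsupp0).mp
      (hu_sum.congr fun kl => (huv kl).symm)
  have e1 : ∑' a : ℕ, (a : ℝ) * p a * h (a + b)
      = ∑' j : ℕ, ((j + 1 : ℕ) : ℝ) * p (j + 1) * h ((j + 1) + b) := by
    refine (Function.Injective.tsum_eq Nat.succ_injective ?_).symm
    rintro (_ | y) hx
    · simp only [Function.mem_support, Nat.cast_zero, zero_mul] at hx
      exact absurd rfl hx
    · exact ⟨y, rfl⟩
  have e2 : ∀ j : ℕ, ((j + 1 : ℕ) : ℝ) * p (j + 1) * h ((j + 1) + b)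
      = ∑' k : ℕ, v (j, k) := by
    intro j
    have hts : ∑' k : ℕ, v (j, k) = ∑ k ∈ range (j + 1), v (j, k) := by
      apply tsum_eq_sum
      intro k hk
      simp only [hv_def]
      rw [if_neg (by simp only [Finset.mem_range] at hk; omega)]
    rw [hts]
    have hfin : ∑ k ∈ range (j + 1), v (j, k)
        = (∑ k ∈ range (j + 1), gg (j - k + 1) * p k) * h (j + 1 + b) := by
      rw [Finset.sum_mul]
      refine Finset.sum_congr rfl fun k hk => ?_
      simp only [hv_def]
      rw [if_pos (by simp only [Finset.mem_range] at hk; omega)]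
      ring
    rw [hfin, ← hrec j]
    push_cast
    ring_nf
  have e3 : ∑' jk : ℕ × ℕ, v jk = ∑' j : ℕ, ∑' k : ℕ, v (j, k) := Summable.tsum_prod hv_sum
  have e4 : ∑' jk : ℕ × ℕ, v jk = ∑' kl : ℕ × ℕ, u kl := by
    rw [← Function.Injective.tsum_eq hφinj hvsupp]
    exact tsum_congr fun kl => huv kl
  have e5 : ∑' kl : ℕ × ℕ, u kl = ∑' k : ℕ, ∑' l : ℕ, u (k, l) := Summable.tsum_prod hu_sum
  have e6 : ∀ k : ℕ, ∑' l : ℕ, u (k, l) = p k * ∑' l : ℕ, gg (l + 1) * h (k + b + l + 1) := by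
    intro k
    rw [show (fun l : ℕ => u (k, l)) = fun l : ℕ => p k * (gg (l + 1) * h (k + b + l + 1)) from
      funext fun l => by
        simp only [hu_def]
        rw [show k + l + 1 + b = k + b + l + 1 from by omega]]
    exact tsum_mul_left
  calc ∑' a : ℕ, (a : ℝ) * p a * h (a + b)
      = ∑' j : ℕ, ∑' k : ℕ, v (j, k) := by rw [e1]; exact tsum_congr e2
    _ = ∑' k : ℕ, ∑' l : ℕ, u (k, l) := by rw [← e3, e4, e5]
    _ = ∑' a : ℕ, p a * ∑' l : ℕ, gg (l + 1) * h (a + b + l + 1) := tsum_congr e6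

lemma F_bound (gg : ℕ → ℝ) (hg : Summable fun k : ℕ => |gg (k + 1)|)
    (h : ℕ → ℝ) (C : ℝ) (hC : ∀ j, |h j| ≤ C) (m : ℕ) :
    |∑' k : ℕ, gg (k + 1) * h (m + k + 1)| ≤ (∑' k : ℕ, |gg (k + 1)|) * C := by
  have hCnn : 0 ≤ C := le_trans (abs_nonneg _) (hC 0)
  have hb : ∀ k : ℕ, ‖gg (k + 1) * h (m + k + 1)‖ ≤ |gg (k + 1)| * C := by
    intro k
    rw [Real.norm_eq_abs, abs_mul]
    exact mul_le_mul_of_nonneg_left (hC _) (abs_nonneg _)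
  have hsn : Summable fun k : ℕ => ‖gg (k + 1) * h (m + k + 1)‖ :=
    Summable.of_nonneg_of_le (fun k => norm_nonneg _) hb (hg.mul_right C)
  calc |∑' k : ℕ, gg (k + 1) * h (m + k + 1)|
      ≤ ∑' k : ℕ, ‖gg (k + 1) * h (m + k + 1)‖ := by
        rw [← Real.norm_eq_abs]; exact norm_tsum_le_tsum_norm hsn
    _ ≤ ∑' k : ℕ, |gg (k + 1)| * C := Summable.tsum_le_tsum hb hsn (hg.mul_right C)
    _ = (∑' k : ℕ, |gg (k + 1)|) * C := tsum_mul_right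

lemma step_i {Ω : Type*} [MeasurableSpace Ω] (P : Measure Ω) [IsProbabilityMeasure P]
    (X Y : Ω → ℕ) (hX : Measurable X) (hY : Measurable Y) (hXY : IndepFun X Y P)
    (gg : ℕ → ℝ) (hg : Summable fun k : ℕ => |gg (k + 1)|)
    (hrec : ∀ j : ℕ, ((j : ℝ) + 1) * pm P X (j + 1) =
      ∑ k ∈ Finset.range (j + 1), gg (j - k + 1) * pm P X k)
    (h : ℕ → ℝ) (C : ℝ) (hC : ∀ j, |h j| ≤ C)
    (hint : Integrable (fun ω => (X ω : ℝ) * h (X ω + Y ω)) P) :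
    ∫ ω, (∑' k : ℕ, gg (k + 1) * h ((X ω + Y ω) + k + 1)) ∂P
      = ∫ ω, (X ω : ℝ) * h (X ω + Y ω) ∂P := by
  have hCnn : 0 ≤ C := le_trans (abs_nonneg _) (hC 0)
  set B : ℝ := (∑' k : ℕ, |gg (k + 1)|) * C with hB_def
  set p : ℕ → ℝ := pm P X with hp_def
  set q : ℕ → ℝ := pm P Y with hq_def
  have hp0 : ∀ a, 0 ≤ p a := pm_nonneg P X
  have hq0 : ∀ a, 0 ≤ q a := pm_nonneg P Y
  have hps : Summable p := pm_summable P X hX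
  have hqs : Summable q := pm_summable P Y hY
  have hap : Summable fun a : ℕ => (a : ℝ) * p a := summable_id_mul p hp0 hps gg hg hrec
  set F : ℕ → ℝ := fun m => ∑' k : ℕ, gg (k + 1) * h (m + k + 1) with hF_def
  have hFb : ∀ m, |F m| ≤ B := fun m => F_bound gg hg h C hC m
  set f1 : ℕ × ℕ → ℝ := fun ba => (ba.2 : ℝ) * h (ba.2 + ba.1) with hf1_def
  set f2 : ℕ × ℕ → ℝ := fun ba => F (ba.2 + ba.1) with hf2_def
  have hint2 : Integrable (fun ω => f2 (Y ω, X ω)) P := by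
    refine ⟨((measurable_of_countable f2).comp (hY.prodMk hX)).aestronglyMeasurable, ?_⟩
    apply HasFiniteIntegral.of_bounded (C := B)
    filter_upwards with ω
    simpa only [Real.norm_eq_abs] using hFb (X ω + Y ω)
  have h1 : ∫ ω, (X ω : ℝ) * h (X ω + Y ω) ∂P
      = ∑' ba : ℕ × ℕ, q ba.1 * p ba.2 * f1 ba :=
    pair_integral P Y X hY hX hXY.symm f1 hint
  have h2 : ∫ ω, F (X ω + Y ω) ∂P = ∑' ba : ℕ × ℕ, q ba.1 * p ba.2 * f2 ba :=
    pair_integral P Y X hY hX hXY.symm f2 hint2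
  have S1 : Summable fun ba : ℕ × ℕ => q ba.1 * p ba.2 * f1 ba := by
    apply Summable.of_norm_bounded (g := fun ba : ℕ × ℕ => q ba.1 * ((ba.2 : ℝ) * p ba.2) * C)
      ((hqs.mul_of_nonneg hap hq0 fun a => mul_nonneg (Nat.cast_nonneg a) (hp0 a)).mul_right C)
    rintro ⟨b, a⟩
    simp only [hf1_def]
    rw [Real.norm_eq_abs]
    calc |q b * p a * ((a : ℝ) * h (a + b))|
        = q b * ((a : ℝ) * p a) * |h (a + b)| := by
          rw [abs_mul, abs_mul, abs_mul, abs_of_nonneg (hq0 b), abs_of_nonneg (hp0 a),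
            abs_of_nonneg (Nat.cast_nonneg a)]
          ring
      _ ≤ q b * ((a : ℝ) * p a) * C := by
          apply mul_le_mul_of_nonneg_left (hC _)
          exact mul_nonneg (hq0 b) (mul_nonneg (Nat.cast_nonneg a) (hp0 a))
  have S2 : Summable fun ba : ℕ × ℕ => q ba.1 * p ba.2 * f2 ba := by
    apply Summable.of_norm_bounded (g := fun ba : ℕ × ℕ => q ba.1 * p ba.2 * B)
      ((hqs.mul_of_nonneg hps hq0 hp0).mul_right B)
    rintro ⟨b, a⟩
    simp only [hf2_def]
    rw [Real.norm_eq_abs, abs_mul, abs_mul, abs_of_nonneg (hq0 b), abs_of_nonneg (hp0 a)]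
    exact mul_le_mul_of_nonneg_left (hFb _) (mul_nonneg (hq0 b) (hp0 a))
  have key : ∑' ba : ℕ × ℕ, q ba.1 * p ba.2 * f2 ba
      = ∑' ba : ℕ × ℕ, q ba.1 * p ba.2 * f1 ba := by
    rw [Summable.tsum_prod S1, Summable.tsum_prod S2]
    refine tsum_congr fun b => ?_
    have l1 : ∑' a : ℕ, q b * p a * f1 (b, a)
        = q b * ∑' a : ℕ, (a : ℝ) * p a * h (a + b) := by
      rw [← tsum_mul_left]
      exact tsum_congr fun a => by simp only [hf1_def]; ring
    have l2 : ∑' a : ℕ, q b * p a * f2 (b, a)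
        = q b * ∑' a : ℕ, p a * F (a + b) := by
      rw [← tsum_mul_left]
      exact tsum_congr fun a => by simp only [hf2_def]; ring
    rw [l1, l2, core_identity p hp0 hps gg hg hrec h C hC b]
  calc ∫ ω, (∑' k : ℕ, gg (k + 1) * h ((X ω + Y ω) + k + 1)) ∂P
      = ∫ ω, F (X ω + Y ω) ∂P := rfl
    _ = ∑' ba : ℕ × ℕ, q ba.1 * p ba.2 * f2 ba := h2
    _ = ∑' ba : ℕ × ℕ, q ba.1 * p ba.2 * f1 ba := key
    _ = ∫ ω, (X ω : ℝ) * h (X ω + Y ω) ∂P := h1.symm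

/-- Proposition 3.1: the operator `𝒜 h(j) = ∑_i ∑_k g_{i,k+1} h(j+k+1) − j h(j)` is a Stein
operator for the sum `Wₙ` of independent random variables satisfying the PGF-coefficient
recursion. -/
theorem stein_operator_for_sum {Ω : Type*} [MeasurableSpace Ω] (P : Measure Ω)
    [IsProbabilityMeasure P] (n : ℕ) (ξ : Fin n → Ω → ℕ) (hmeas : ∀ i, Measurable (ξ i))
    (hindep : iIndepFun ξ P)
    (g : Fin n → ℕ → ℝ)
    (hsum : ∀ i, Summable fun k : ℕ => |g i (k + 1)|)
    (hrec : ∀ i, ∀ j : ℕ, ((j : ℝ) + 1) * pm P (ξ i) (j + 1) =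
      ∑ k ∈ Finset.range (j + 1), g i (j - k + 1) * pm P (ξ i) k)
    (hmean : Integrable (fun ω => ((∑ i, ξ i ω : ℕ) : ℝ)) P)
    (h : ℕ → ℝ) (hbdd : ∃ C, ∀ j, |h j| ≤ C) :
    ∫ ω, (∑ i, ∑' k : ℕ, g i (k + 1) * h ((∑ i, ξ i ω) + k + 1)) ∂P =
      ∫ ω, ((∑ i, ξ i ω : ℕ) : ℝ) * h (∑ i, ξ i ω) ∂P := by
  obtain ⟨C, hC⟩ := hbdd
  have hCnn : 0 ≤ C := le_trans (abs_nonneg _) (hC 0)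
  have hWmeas : Measurable fun ω => ∑ i, ξ i ω :=
    Finset.measurable_sum _ fun i _ => hmeas i
  have hξleW : ∀ (i : Fin n) (ω : Ω), ξ i ω ≤ ∑ j, ξ j ω := fun i ω =>
    Finset.single_le_sum (f := fun j => ξ j ω) (fun j _ => Nat.zero_le _) (Finset.mem_univ i)
  have hintX : ∀ i : Fin n, Integrable (fun ω => (ξ i ω : ℝ) * h (∑ j, ξ j ω)) P := by
    intro i
    have hm : Measurable fun ω => (ξ i ω : ℝ) * h (∑ j, ξ j ω) :=
      (measurable_of_countable fun q : ℕ × ℕ => (q.1 : ℝ) * h q.2).comp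
        ((hmeas i).prodMk hWmeas)
    refine Integrable.mono (hmean.const_mul C) hm.aestronglyMeasurable ?_
    filter_upwards with ω
    rw [Real.norm_eq_abs, Real.norm_eq_abs, abs_mul]
    have h1 : |((ξ i ω : ℕ) : ℝ)| ≤ |((∑ j, ξ j ω : ℕ) : ℝ)| := by
      rw [abs_of_nonneg (Nat.cast_nonneg _), abs_of_nonneg (Nat.cast_nonneg _)]
      exact_mod_cast hξleW i ω
    have h2 : |h (∑ j, ξ j ω)| ≤ |C| := le_trans (hC _) (le_abs_self C)
    calc |((ξ i ω : ℕ) : ℝ)| * |h (∑ j, ξ j ω)|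
        ≤ |((∑ j, ξ j ω : ℕ) : ℝ)| * |C| :=
          mul_le_mul h1 h2 (abs_nonneg _) (abs_nonneg _)
      _ = |C * ((∑ j, ξ j ω : ℕ) : ℝ)| := by rw [abs_mul]; ring
  have hintF : ∀ i : Fin n,
      Integrable (fun ω => ∑' k : ℕ, g i (k + 1) * h ((∑ j, ξ j ω) + k + 1)) P := by
    intro i
    have hm : Measurable fun ω => ∑' k : ℕ, g i (k + 1) * h ((∑ j, ξ j ω) + k + 1) :=
      (measurable_of_countable fun m : ℕ => ∑' k : ℕ, g i (k + 1) * h (m + k + 1)).comp hWmeas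
    refine ⟨hm.aestronglyMeasurable, ?_⟩
    apply HasFiniteIntegral.of_bounded (C := (∑' k : ℕ, |g i (k + 1)|) * C)
    filter_upwards with ω
    simpa only [Real.norm_eq_abs] using F_bound (g i) (hsum i) h C hC (∑ j, ξ j ω)
  rw [integral_finset_sum Finset.univ fun i _ => hintF i]
  have hRHS : (fun ω => ((∑ i, ξ i ω : ℕ) : ℝ) * h (∑ i, ξ i ω))
      = fun ω => ∑ i, (ξ i ω : ℝ) * h (∑ j, ξ j ω) := by
    funext ω
    rw [← Finset.sum_mul]
    congr 1
    push_cast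
    rfl
  rw [hRHS, integral_finset_sum Finset.univ fun i _ => hintX i]
  refine Finset.sum_congr rfl fun i _ => ?_
  set Y : Ω → ℕ := fun ω => ∑ j ∈ Finset.univ.erase i, ξ j ω with hY_def
  have hYmeas : Measurable Y := Finset.measurable_sum _ fun j _ => hmeas j
  have hYfun : Y = ∑ j ∈ Finset.univ.erase i, ξ j := by
    funext ω
    rw [hY_def]
    exact (Finset.sum_apply ω (Finset.univ.erase i) fun j => ξ j).symm
  have hXY : IndepFun (ξ i) Y P := by
    rw [hYfun]
    exact (hindep.indepFun_finsetSum_of_notMem hmeas (Finset.notMem_erase i Finset.univ)).symm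
  have hWs : ∀ ω, (∑ j, ξ j ω) = ξ i ω + Y ω := by
    intro ω
    rw [hY_def]
    exact (Finset.add_sum_erase Finset.univ (fun j => ξ j ω) (Finset.mem_univ i)).symm
  have e1 : (fun ω => ∑' k : ℕ, g i (k + 1) * h ((∑ j, ξ j ω) + k + 1))
      = fun ω => ∑' k : ℕ, g i (k + 1) * h ((ξ i ω + Y ω) + k + 1) :=
    funext fun ω => by rw [hWs ω]
  have e2 : (fun ω => (ξ i ω : ℝ) * h (∑ j, ξ j ω))
      = fun ω => (ξ i ω : ℝ) * h (ξ i ω + Y ω) :=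
    funext fun ω => by rw [hWs ω]
  have hint' : Integrable (fun ω => (ξ i ω : ℝ) * h (ξ i ω + Y ω)) P := by
    rw [← e2]; exact hintX i
  rw [e1, e2]
  exact step_i P (ξ i) Y (hmeas i) hYmeas hXY (g i) (hsum i) (hrec i) h C hC hint'
end

section
/- Let X be a Poisson random variable with parameter λ > 0 and Y an independent geometric random variable with parameter p ∈ (0,1), q = 1 − p, and set Z = X + Y. Then for every j ∈ ℤ₊, (j+1)·P(Z = j+1) = λ·P(Z = j) + ∑_{k=0}^{j} q^{j−k+1}·P(Z = k). -/
open MeasureTheory ProbabilityTheory Finset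

lemma pm_conv {Ω : Type*} [MeasurableSpace Ω] (P : Measure Ω)
    [IsProbabilityMeasure P] (X Y : Ω → ℕ) (hX : Measurable X) (hY : Measurable Y)
    (hindep : IndepFun X Y P) (n : ℕ) :
    pm P (fun ω => X ω + Y ω) n = ∑ i ∈ Finset.range (n + 1), pm P X i * pm P Y (n - i) := by
  have hset : {ω | X ω + Y ω = n} =
      ⋃ i ∈ Finset.range (n + 1), ({ω | X ω = i} ∩ {ω | Y ω = n - i}) := by
    ext ω
    simp only [Set.mem_setOf_eq, Set.mem_iUnion, Finset.mem_range, Set.mem_inter_iff]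
    constructor
    · intro h; exact ⟨X ω, by omega, rfl, by omega⟩
    · rintro ⟨i, hi, h1, h2⟩; omega
  have hmeas : ∀ i : ℕ, MeasurableSet ({ω | X ω = i} ∩ {ω | Y ω = n - i}) := fun i =>
    (hX (measurableSet_singleton i)).inter (hY (measurableSet_singleton (n - i)))
  have hdisj : (Finset.range (n + 1) : Set ℕ).PairwiseDisjoint
      (fun i => {ω | X ω = i} ∩ {ω | Y ω = n - i}) := by
    intro i _ k _ hik
    refine Set.disjoint_left.mpr ?_
    rintro ω ⟨h1, _⟩ ⟨h2, _⟩
    exact hik (h1.symm.trans h2)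
  have hmul : ∀ i : ℕ, P ({ω | X ω = i} ∩ {ω | Y ω = n - i}) =
      P {ω | X ω = i} * P {ω | Y ω = n - i} := by
    intro i
    have := hindep.measure_inter_preimage_eq_mul ({i} : Set ℕ) ({n - i} : Set ℕ)
      (measurableSet_singleton i) (measurableSet_singleton (n - i))
    simpa [Set.preimage] using this
  rw [pm, hset, measure_biUnion_finset hdisj (fun i _ => hmeas i),
    ENNReal.toReal_sum (fun i _ => (measure_ne_top P _))]
  refine Finset.sum_congr rfl fun i _ => ?_
  rw [hmul i, ENNReal.toReal_mul]; rfl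

lemma key_alg (lam p : ℝ) (j : ℕ) :
    have a : ℕ → ℝ := fun i => Real.exp (-lam) * lam ^ i / i.factorial
    have b : ℕ → ℝ := fun k => (1 - p) ^ k * p
    ((j : ℝ) + 1) * ∑ i ∈ range (j + 2), a i * b (j + 1 - i) =
      lam * ∑ i ∈ range (j + 1), a i * b (j - i) +
        ∑ k ∈ range (j + 1), (1 - p) ^ (j - k + 1) * ∑ i ∈ range (k + 1), a i * b (k - i) := by
  intro a b
  have hab : ∀ i : ℕ, ((i : ℝ) + 1) * a (i + 1) = lam * a i := by
    intro i
    have h0 : (i.factorial : ℝ) ≠ 0 := Nat.cast_ne_zero.mpr i.factorial_ne_zero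
    simp only [a, Nat.factorial_succ, pow_succ, Nat.cast_mul]
    push_cast
    field_simp
  have hthird : ∑ k ∈ range (j + 1), (1 - p) ^ (j - k + 1) * ∑ i ∈ range (k + 1), a i * b (k - i)
      = ∑ i ∈ range (j + 1), (↑(j + 1 - i) : ℝ) * (a i * b (j + 1 - i)) := by
    have h1 : ∑ k ∈ range (j + 1), (1 - p) ^ (j - k + 1) * ∑ i ∈ range (k + 1), a i * b (k - i)
        = ∑ k ∈ Finset.Ico 0 (j + 1), ∑ i ∈ Finset.Ico 0 (k + 1),
            (1 - p) ^ (j - k + 1) * (a i * b (k - i)) := by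
      rw [Finset.range_eq_Ico]
      refine Finset.sum_congr rfl fun k _ => ?_
      rw [Finset.mul_sum, Finset.range_eq_Ico]
    rw [h1, ← Finset.sum_Ico_Ico_comm, ← Finset.range_eq_Ico]
    refine Finset.sum_congr rfl fun i hi => ?_
    rw [Finset.mem_range] at hi
    rw [Finset.sum_Ico_eq_sum_range]
    have hconst : ∀ m ∈ range (j + 1 - i), (1 - p) ^ (j - (i + m) + 1) * (a i * b ((i + m) - i))
        = a i * ((1 - p) ^ (j + 1 - i) * p) := by
      intro m hm
      rw [Finset.mem_range] at hm
      have he : (j - (i + m) + 1) + m = j + 1 - i := by omega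
      have hb : b ((i + m) - i) = (1 - p) ^ m * p := by
        simp [b, Nat.add_sub_cancel_left]
      rw [hb, ← he, pow_add]
      ring
    rw [Finset.sum_congr rfl hconst, Finset.sum_const, Finset.card_range, nsmul_eq_mul]
  have hsecond : lam * ∑ i ∈ range (j + 1), a i * b (j - i)
      = ∑ i ∈ range (j + 1), ((i : ℝ) + 1) * a (i + 1) * b (j - i) := by
    rw [Finset.mul_sum]
    refine Finset.sum_congr rfl fun i _ => ?_
    rw [hab i]; ring
  rw [hsecond, hthird]
  rw [Finset.mul_sum]
  have hsplit : ∀ i ∈ range (j + 2), ((j : ℝ) + 1) * (a i * b (j + 1 - i))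
      = (i : ℝ) * (a i * b (j + 1 - i)) + (↑(j + 1 - i) : ℝ) * (a i * b (j + 1 - i)) := by
    intro i hi
    rw [Finset.mem_range] at hi
    have hc : ((j + 1 - i : ℕ) : ℝ) = (j : ℝ) + 1 - i := by
      rw [Nat.cast_sub (by omega : i ≤ j + 1)]
      push_cast; ring
    rw [hc]; ring
  rw [Finset.sum_congr rfl hsplit, Finset.sum_add_distrib]
  congr 1
  · rw [Finset.sum_range_succ']
    simp only [Nat.cast_zero, zero_mul, add_zero]
    refine Finset.sum_congr rfl fun i hi => ?_
    rw [Finset.mem_range] at hi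
    have h2 : j + 1 - (i + 1) = j - i := by omega
    rw [h2]
    push_cast
    ring
  · rw [Finset.sum_range_succ]
    simp only [Nat.sub_self, Nat.cast_zero, zero_mul, add_zero]

/-- The PMF recursion for `Z = X + Y` with `X` Poisson(λ) and `Y` an independent
geometric(p) random variable (proved inside Proposition 3.2). -/
theorem poisson_geometric_pmf_recursion {Ω : Type*} [MeasurableSpace Ω] (P : Measure Ω)
    [IsProbabilityMeasure P] (lam p : ℝ) (hlam : 0 < lam) (hp : p ∈ Set.Ioo (0 : ℝ) 1)
    (X Y : Ω → ℕ) (hX : Measurable X) (hY : Measurable Y)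
    (hXpmf : ∀ k : ℕ, pm P X k = Real.exp (-lam) * lam ^ k / k.factorial)
    (hYpmf : ∀ k : ℕ, pm P Y k = (1 - p) ^ k * p)
    (hindep : IndepFun X Y P) (j : ℕ) :
    ((j : ℝ) + 1) * pm P (fun ω => X ω + Y ω) (j + 1) =
      lam * pm P (fun ω => X ω + Y ω) j +
        ∑ k ∈ Finset.range (j + 1), (1 - p) ^ (j - k + 1) * pm P (fun ω => X ω + Y ω) k := by
  have hconv := pm_conv P X Y hX hY hindep
  have hZ : ∀ n : ℕ, pm P (fun ω => X ω + Y ω) n =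
      ∑ i ∈ Finset.range (n + 1),
        (Real.exp (-lam) * lam ^ i / i.factorial) * ((1 - p) ^ (n - i) * p) := by
    intro n
    rw [hconv n]
    exact Finset.sum_congr rfl fun i _ => by rw [hXpmf i, hYpmf (n - i)]
  simp only [hZ]
  exact key_alg lam p j
end

section
/- Let X be a Poisson random variable with parameter λ > 0 and Y an independent geometric random variable with parameter p ∈ (0,1), q = 1 − p, and set Z = X + Y. Then for every bounded function h : ℤ₊ → ℝ, E[ λ·h(Z+1) + ∑_{k=0}^{∞} q^{k+1}·h(Z+k+1) ] = E[ Z·h(Z) ]. Equivalently, the operator 𝒜 h(j) = λ h(j+1) − j h(j) + ∑_{k=0}^{∞} q^{k+1} h(j+k+1) satisfies E[𝒜 h(Z)] = 0. -/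
open MeasureTheory ProbabilityTheory Finset

namespace SteinAux

/-- Poisson pmf. -/
noncomputable def pX (lam : ℝ) (i : ℕ) : ℝ := Real.exp (-lam) * lam ^ i / (Nat.factorial i)

/-- Geometric pmf. -/
noncomputable def pY (p : ℝ) (k : ℕ) : ℝ := (1 - p) ^ k * p

variable {lam p : ℝ}

lemma pX_nonneg (hlam : 0 < lam) (i : ℕ) : 0 ≤ pX lam i := by
  unfold pX; positivity

lemma pY_nonneg (hp : p ∈ Set.Ioo (0 : ℝ) 1) (k : ℕ) : 0 ≤ pY p k := by
  unfold pY
  have h1 : (0:ℝ) ≤ 1 - p := by linarith [hp.2]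
  have h2 : (0:ℝ) ≤ p := le_of_lt hp.1
  positivity

lemma summable_pX (lam : ℝ) : Summable (pX lam) := by
  have h := (Real.summable_pow_div_factorial lam).mul_left (Real.exp (-lam))
  have heq : (fun i : ℕ => Real.exp (-lam) * (lam ^ i / (Nat.factorial i : ℝ))) = pX lam := by
    funext i; unfold pX; ring
  rwa [heq] at h

lemma pX_succ_mul (i : ℕ) : pX lam (i + 1) * ((i : ℝ) + 1) = lam * pX lam i := by
  unfold pX
  rw [Nat.factorial_succ]
  have h1 : ((i : ℝ) + 1) ≠ 0 := by positivity
  have h2 : ((Nat.factorial i : ℝ)) ≠ 0 := by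
    exact_mod_cast Nat.factorial_ne_zero i
  push_cast
  field_simp
  ring

lemma summable_mul_pX (lam : ℝ) : Summable (fun i : ℕ => (i : ℝ) * pX lam i) := by
  apply (_root_.summable_nat_add_iff 1).1
  have heq : (fun n : ℕ => ((n + 1 : ℕ) : ℝ) * pX lam (n + 1)) = fun n : ℕ => lam * pX lam n := by
    funext n
    push_cast
    rw [mul_comm, pX_succ_mul]
  rw [heq]
  exact (summable_pX lam).mul_left lam

lemma summable_pY (hp : p ∈ Set.Ioo (0 : ℝ) 1) : Summable (pY p) := by
  have h1 : (0:ℝ) ≤ 1 - p := by linarith [hp.2]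
  have h2 : 1 - p < 1 := by linarith [hp.1]
  exact (summable_geometric_of_lt_one h1 h2).mul_right p

lemma summable_mul_pY (hp : p ∈ Set.Ioo (0 : ℝ) 1) :
    Summable (fun k : ℕ => (k : ℝ) * pY p k) := by
  have hnorm : ‖1 - p‖ < 1 := by
    rw [Real.norm_eq_abs, abs_lt]; constructor <;> linarith [hp.1, hp.2]
  have := (summable_pow_mul_geometric_of_norm_lt_one 1 hnorm).mul_right p
  have heq : (fun k : ℕ => (k : ℝ) * pY p k)
      = fun k : ℕ => ((k : ℝ) ^ 1 * (1 - p) ^ k) * p := by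
    funext k; unfold pY; ring
  rw [heq]
  exact this

/-- Summing a function of `x.1 + x.2` over `ℕ × ℕ` counts each value `n` exactly `n+1` times. -/
lemma tsum_diag {G : ℕ → ℝ} (hG : Summable (fun x : ℕ × ℕ => G (x.1 + x.2))) :
    ∑' x : ℕ × ℕ, G (x.1 + x.2) = ∑' n : ℕ, ((n : ℝ) + 1) * G n := by
  have h1 := (Finset.HasAntidiagonal.sigmaAntidiagonalEquivProd (A := ℕ)).tsum_eq
      (fun x : ℕ × ℕ => G (x.1 + x.2))
  rw [← h1]
  have hs : Summable (fun y : (Σ n : ℕ, (antidiagonal n : Finset (ℕ × ℕ))) =>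
      G ((Finset.HasAntidiagonal.sigmaAntidiagonalEquivProd y).1 + (Finset.HasAntidiagonal.sigmaAntidiagonalEquivProd y).2)) :=
    (Finset.HasAntidiagonal.sigmaAntidiagonalEquivProd (A := ℕ)).summable_iff.2 hG
  rw [Summable.tsum_sigma hs]
  refine tsum_congr fun n => ?_
  have hterm : ∀ c : (antidiagonal n : Finset (ℕ × ℕ)),
      G ((Finset.HasAntidiagonal.sigmaAntidiagonalEquivProd ⟨n, c⟩).1 +
        (Finset.HasAntidiagonal.sigmaAntidiagonalEquivProd ⟨n, c⟩).2) = G n := by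
    rintro ⟨⟨a, b⟩, hc⟩
    rw [Finset.HasAntidiagonal.mem_antidiagonal] at hc
    simp [Finset.HasAntidiagonal.sigmaAntidiagonalEquivProd, hc]
  rw [tsum_congr hterm, tsum_const]
  have hcard : Nat.card (antidiagonal n : Finset (ℕ × ℕ)) = n + 1 := by
    rw [Nat.card_eq_fintype_card, Fintype.card_coe, Finset.Nat.card_antidiagonal]
  rw [hcard, nsmul_eq_mul]
  push_cast
  ring

section Steps

variable {lam p C : ℝ}

lemma summable_inner (hp : p ∈ Set.Ioo (0 : ℝ) 1) {g : ℕ → ℝ} (hC : ∀ n, |g n| ≤ C)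
    (j : ℕ) : Summable (fun m : ℕ => (1 - p) ^ (m + 1) * g (j + m + 1)) := by
  have hq0 : (0:ℝ) ≤ 1 - p := by linarith [hp.2]
  have hq1 : 1 - p < 1 := by linarith [hp.1]
  have hC0 : 0 ≤ C := le_trans (abs_nonneg _) (hC 0)
  refine Summable.of_norm_bounded (g := fun m => (C * (1 - p)) * (1 - p) ^ m)
    ((summable_geometric_of_lt_one hq0 hq1).mul_left _) fun m => ?_
  rw [Real.norm_eq_abs, abs_mul, abs_pow, abs_of_nonneg hq0]
  calc (1 - p) ^ (m+1) * |g (j + m + 1)| ≤ (1 - p) ^ (m+1) * C := by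
        exact mul_le_mul_of_nonneg_left (hC _) (by positivity)
    _ = (C * (1 - p)) * (1 - p) ^ m := by ring

lemma inner_bound (hp : p ∈ Set.Ioo (0 : ℝ) 1) {g : ℕ → ℝ} (hC : ∀ n, |g n| ≤ C)
    (j : ℕ) : |∑' m : ℕ, (1 - p) ^ (m + 1) * g (j + m + 1)| ≤ C * (1 - p) * (1 - (1 - p))⁻¹ := by
  have hq0 : (0:ℝ) ≤ 1 - p := by linarith [hp.2]
  have hq1 : 1 - p < 1 := by linarith [hp.1]
  have hC0 : 0 ≤ C := le_trans (abs_nonneg _) (hC 0)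
  have hs : Summable (fun m : ℕ => ‖(1 - p) ^ (m + 1) * g (j + m + 1)‖) := by
    simp only [Real.norm_eq_abs]
    exact (summable_inner (C := C) hp hC j).abs
  have h1 : |∑' m : ℕ, (1 - p) ^ (m + 1) * g (j + m + 1)|
      ≤ ∑' m : ℕ, ‖(1 - p) ^ (m + 1) * g (j + m + 1)‖ := by
    simpa [Real.norm_eq_abs] using norm_tsum_le_tsum_norm hs
  refine h1.trans ?_
  have h2 : ∑' m : ℕ, ‖(1 - p) ^ (m + 1) * g (j + m + 1)‖
      ≤ ∑' m : ℕ, (C * (1 - p)) * (1 - p) ^ m := by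
    refine Summable.tsum_le_tsum (fun m => ?_) hs ((summable_geometric_of_lt_one hq0 hq1).mul_left _)
    rw [Real.norm_eq_abs, abs_mul, abs_pow, abs_of_nonneg hq0]
    calc (1 - p) ^ (m+1) * |g (j + m + 1)| ≤ (1 - p) ^ (m+1) * C := by
          exact mul_le_mul_of_nonneg_left (hC _) (by positivity)
      _ = (C * (1 - p)) * (1 - p) ^ m := by ring
  refine h2.trans ?_
  rw [tsum_mul_left, tsum_geometric_of_lt_one hq0 hq1]

lemma poisson_step (hlam : 0 < lam) {g : ℕ → ℝ} (hC : ∀ n, |g n| ≤ C) :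
    ∑' i : ℕ, pX lam i * (i : ℝ) * g i = lam * ∑' i : ℕ, pX lam i * g (i + 1) := by
  have hC0 : 0 ≤ C := le_trans (abs_nonneg _) (hC 0)
  have hsum : Summable (fun i : ℕ => pX lam i * (i : ℝ) * g i) := by
    refine Summable.of_norm_bounded (g := fun i => C * ((i : ℝ) * pX lam i))
      ((summable_mul_pX lam).mul_left C) fun i => ?_
    rw [Real.norm_eq_abs, abs_mul, abs_mul, abs_of_nonneg (pX_nonneg hlam i),
      abs_of_nonneg (Nat.cast_nonneg i)]
    calc pX lam i * (i : ℝ) * |g i| ≤ pX lam i * (i : ℝ) * C := by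
          exact mul_le_mul_of_nonneg_left (hC i)
            (mul_nonneg (pX_nonneg hlam i) (Nat.cast_nonneg i))
      _ = C * ((i : ℝ) * pX lam i) := by ring
  rw [Summable.tsum_eq_zero_add hsum]
  simp only [Nat.cast_zero, mul_zero, zero_mul, zero_add]
  rw [← tsum_mul_left]
  refine tsum_congr fun i => ?_
  have hc : ((i + 1 : ℕ) : ℝ) = (i : ℝ) + 1 := by push_cast; ring
  rw [hc, pX_succ_mul, mul_assoc]

lemma geom_step (hp : p ∈ Set.Ioo (0 : ℝ) 1) {g : ℕ → ℝ} (hC : ∀ n, |g n| ≤ C) :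
    ∑' k : ℕ, pY p k * (∑' m : ℕ, (1 - p) ^ (m + 1) * g (k + m + 1))
      = ∑' k : ℕ, pY p k * (k : ℝ) * g k := by
  have hq0 : (0:ℝ) ≤ 1 - p := by linarith [hp.2]
  have hq1 : 1 - p < 1 := by linarith [hp.1]
  have hC0 : 0 ≤ C := le_trans (abs_nonneg _) (hC 0)
  set q : ℝ := 1 - p with hq
  -- the big double-indexed function
  set F : ℕ × ℕ → ℝ := fun x => q ^ (x.1 + x.2 + 1) * g (x.1 + x.2 + 1) with hF
  have hFsumm : Summable F := by
    have humaj : Summable (fun x : ℕ × ℕ => C * q ^ (x.1 + x.2 + 1)) := by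
      rw [summable_prod_of_nonneg (fun x => mul_nonneg hC0 (by positivity))]
      constructor
      · intro k
        have : (fun m : ℕ => C * q ^ (k + m + 1)) = fun m => (C * q ^ (k + 1)) * q ^ m := by
          funext m; rw [show k + m + 1 = (k + 1) + m by omega, pow_add]; ring
        rw [this]
        exact (summable_geometric_of_lt_one hq0 hq1).mul_left _
      · have hval : ∀ k : ℕ, ∑' m : ℕ, C * q ^ (k + m + 1)
            = (C * (1 - q)⁻¹ * q) * q ^ k := by
          intro k
          have : (fun m : ℕ => C * q ^ (k + m + 1)) = fun m => (C * q ^ (k + 1)) * q ^ m := by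
            funext m; rw [show k + m + 1 = (k + 1) + m by omega, pow_add]; ring
          rw [this, tsum_mul_left, tsum_geometric_of_lt_one hq0 hq1, pow_succ]
          ring
        simp only [hval]
        exact (summable_geometric_of_lt_one hq0 hq1).mul_left _
    refine Summable.of_norm_bounded humaj fun x => ?_
    rw [Real.norm_eq_abs, abs_mul, abs_pow, abs_of_nonneg hq0]
    calc q ^ (x.1 + x.2 + 1) * |g (x.1 + x.2 + 1)| ≤ q ^ (x.1 + x.2 + 1) * C := by
          exact mul_le_mul_of_nonneg_left (hC _) (by positivity)
      _ = C * q ^ (x.1 + x.2 + 1) := by ring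
  -- step 1 : pull `p` and merge powers
  have hstep1 : ∀ k : ℕ, pY p k * (∑' m : ℕ, q ^ (m + 1) * g (k + m + 1))
      = p * ∑' m : ℕ, F (k, m) := by
    intro k
    rw [← tsum_mul_left, ← tsum_mul_left]
    refine tsum_congr fun m => ?_
    show pY p k * (q ^ (m + 1) * g (k + m + 1)) = p * (q ^ (k + m + 1) * g (k + m + 1))
    unfold pY
    rw [← hq, show k + m + 1 = k + (m + 1) by omega, pow_add]
    ring
  calc ∑' k : ℕ, pY p k * (∑' m : ℕ, q ^ (m + 1) * g (k + m + 1))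
      = ∑' k : ℕ, p * ∑' m : ℕ, F (k, m) := tsum_congr hstep1
    _ = p * ∑' k : ℕ, ∑' m : ℕ, F (k, m) := tsum_mul_left
    _ = p * ∑' x : ℕ × ℕ, F x := by rw [← Summable.tsum_prod hFsumm]
    _ = p * ∑' n : ℕ, ((n : ℝ) + 1) * (q ^ (n + 1) * g (n + 1)) := by
        rw [tsum_diag (G := fun n => q ^ (n + 1) * g (n + 1)) hFsumm]
    _ = ∑' k : ℕ, pY p k * (k : ℝ) * g k := by
        have hsumR : Summable (fun k : ℕ => pY p k * (k : ℝ) * g k) := by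
          refine Summable.of_norm_bounded (g := fun k => C * ((k : ℝ) * pY p k))
            ((summable_mul_pY hp).mul_left C) fun k => ?_
          rw [Real.norm_eq_abs, abs_mul, abs_mul, abs_of_nonneg (pY_nonneg hp k),
            abs_of_nonneg (Nat.cast_nonneg k)]
          calc pY p k * (k : ℝ) * |g k| ≤ pY p k * (k : ℝ) * C := by
                exact mul_le_mul_of_nonneg_left (hC k)
                  (mul_nonneg (pY_nonneg hp k) (Nat.cast_nonneg k))
            _ = C * ((k : ℝ) * pY p k) := by ring
        rw [Summable.tsum_eq_zero_add hsumR]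
        simp only [Nat.cast_zero, mul_zero, zero_mul, zero_add]
        rw [← tsum_mul_left]
        refine tsum_congr fun n => ?_
        unfold pY
        rw [← hq]
        push_cast
        ring

end Steps

section Main

variable {lam p C : ℝ} {h : ℕ → ℝ}

lemma abs_weight_le {a b c D : ℝ} (ha : 0 ≤ a) (hb : 0 ≤ b) (hc : |c| ≤ D) :
    ‖a * b * c‖ ≤ D * (a * b) := by
  rw [Real.norm_eq_abs, abs_mul, abs_mul, abs_of_nonneg ha, abs_of_nonneg hb]
  calc a * b * |c| ≤ a * b * D := mul_le_mul_of_nonneg_left hc (mul_nonneg ha hb)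
    _ = D * (a * b) := by ring

lemma summable_pXY (hlam : 0 < lam) (hp : p ∈ Set.Ioo (0:ℝ) 1) :
    Summable (fun x : ℕ × ℕ => pX lam x.1 * pY p x.2) :=
  (summable_pX lam).mul_of_nonneg (summable_pY hp) (pX_nonneg hlam) (pY_nonneg hp)

lemma summable_pXY_fst (hlam : 0 < lam) (hp : p ∈ Set.Ioo (0:ℝ) 1) :
    Summable (fun x : ℕ × ℕ => (x.1 : ℝ) * (pX lam x.1 * pY p x.2)) := by
  have := (summable_mul_pX lam).mul_of_nonneg (summable_pY hp)
    (fun i => mul_nonneg (Nat.cast_nonneg i) (pX_nonneg hlam i)) (pY_nonneg hp)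
  have heq : (fun x : ℕ × ℕ => ((x.1 : ℝ) * pX lam x.1) * pY p x.2)
      = fun x : ℕ × ℕ => (x.1 : ℝ) * (pX lam x.1 * pY p x.2) := by
    funext x; ring
  rwa [heq] at this

lemma summable_pXY_snd (hlam : 0 < lam) (hp : p ∈ Set.Ioo (0:ℝ) 1) :
    Summable (fun x : ℕ × ℕ => (x.2 : ℝ) * (pX lam x.1 * pY p x.2)) := by
  have := (summable_pX lam).mul_of_nonneg (summable_mul_pY hp)
    (pX_nonneg hlam) (fun k => mul_nonneg (Nat.cast_nonneg k) (pY_nonneg hp k))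
  have heq : (fun x : ℕ × ℕ => pX lam x.1 * ((x.2 : ℝ) * pY p x.2))
      = fun x : ℕ × ℕ => (x.2 : ℝ) * (pX lam x.1 * pY p x.2) := by
    funext x; ring
  rwa [heq] at this

lemma summable_A1 (hlam : 0 < lam) (hp : p ∈ Set.Ioo (0:ℝ) 1) (hC : ∀ j, |h j| ≤ C) :
    Summable (fun x : ℕ × ℕ => pX lam x.1 * pY p x.2 * (lam * h (x.1 + x.2 + 1))) := by
  have hC0 : 0 ≤ C := le_trans (abs_nonneg _) (hC 0)
  refine Summable.of_norm_bounded (g := fun x => (lam * C) * (pX lam x.1 * pY p x.2))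
    ((summable_pXY hlam hp).mul_left _) fun x => ?_
  refine abs_weight_le (pX_nonneg hlam _) (pY_nonneg hp _) ?_
  rw [abs_mul, abs_of_pos hlam]
  exact mul_le_mul_of_nonneg_left (hC _) hlam.le

lemma summable_B1 (hlam : 0 < lam) (hp : p ∈ Set.Ioo (0:ℝ) 1) (hC : ∀ j, |h j| ≤ C) :
    Summable (fun x : ℕ × ℕ => pX lam x.1 * pY p x.2 *
      (∑' m : ℕ, (1 - p) ^ (m + 1) * h (x.1 + x.2 + m + 1))) := by
  refine Summable.of_norm_bounded
    (g := fun x => (C * (1 - p) * (1 - (1 - p))⁻¹) * (pX lam x.1 * pY p x.2))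
    ((summable_pXY hlam hp).mul_left _) fun x => ?_
  exact abs_weight_le (pX_nonneg hlam _) (pY_nonneg hp _) (inner_bound hp hC _)

lemma summable_A2 (hlam : 0 < lam) (hp : p ∈ Set.Ioo (0:ℝ) 1) (hC : ∀ j, |h j| ≤ C) :
    Summable (fun x : ℕ × ℕ => pX lam x.1 * pY p x.2 * ((x.1 : ℝ) * h (x.1 + x.2))) := by
  have hC0 : 0 ≤ C := le_trans (abs_nonneg _) (hC 0)
  refine Summable.of_norm_bounded
    (g := fun x : ℕ × ℕ => ((x.1 : ℝ) * C) * (pX lam x.1 * pY p x.2)) ?_ fun x => ?_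
  · have heq : (fun x : ℕ × ℕ => ((x.1 : ℝ) * C) * (pX lam x.1 * pY p x.2))
        = fun x : ℕ × ℕ => C * ((x.1 : ℝ) * (pX lam x.1 * pY p x.2)) := by
      funext x; ring
    rw [heq]
    exact (summable_pXY_fst hlam hp).mul_left C
  · refine abs_weight_le (pX_nonneg hlam _) (pY_nonneg hp _) ?_
    rw [abs_mul, abs_of_nonneg (Nat.cast_nonneg x.1)]
    exact mul_le_mul_of_nonneg_left (hC _) (Nat.cast_nonneg x.1)

lemma summable_B2 (hlam : 0 < lam) (hp : p ∈ Set.Ioo (0:ℝ) 1) (hC : ∀ j, |h j| ≤ C) :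
    Summable (fun x : ℕ × ℕ => pX lam x.1 * pY p x.2 * ((x.2 : ℝ) * h (x.1 + x.2))) := by
  have hC0 : 0 ≤ C := le_trans (abs_nonneg _) (hC 0)
  refine Summable.of_norm_bounded
    (g := fun x : ℕ × ℕ => ((x.2 : ℝ) * C) * (pX lam x.1 * pY p x.2)) ?_ fun x => ?_
  · have heq : (fun x : ℕ × ℕ => ((x.2 : ℝ) * C) * (pX lam x.1 * pY p x.2))
        = fun x : ℕ × ℕ => C * ((x.2 : ℝ) * (pX lam x.1 * pY p x.2)) := by
      funext x; ring
    rw [heq]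
    exact (summable_pXY_snd hlam hp).mul_left C
  · refine abs_weight_le (pX_nonneg hlam _) (pY_nonneg hp _) ?_
    rw [abs_mul, abs_of_nonneg (Nat.cast_nonneg x.2)]
    exact mul_le_mul_of_nonneg_left (hC _) (Nat.cast_nonneg x.2)

lemma claim1 (hlam : 0 < lam) (hp : p ∈ Set.Ioo (0:ℝ) 1) (hC : ∀ j, |h j| ≤ C) :
    ∑' x : ℕ × ℕ, pX lam x.1 * pY p x.2 * (lam * h (x.1 + x.2 + 1))
      = ∑' x : ℕ × ℕ, pX lam x.1 * pY p x.2 * ((x.1 : ℝ) * h (x.1 + x.2)) := by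
  have e : ℕ × ℕ ≃ ℕ × ℕ := Equiv.prodComm ℕ ℕ
  set F1 : ℕ × ℕ → ℝ := fun x => pX lam x.1 * pY p x.2 * (lam * h (x.1 + x.2 + 1)) with hF1
  set F2 : ℕ × ℕ → ℝ := fun x => pX lam x.1 * pY p x.2 * ((x.1 : ℝ) * h (x.1 + x.2)) with hF2
  have hS1 : Summable (fun x : ℕ × ℕ => F1 (x.2, x.1)) :=
    ((Equiv.prodComm ℕ ℕ).summable_iff (f := F1)).2 (summable_A1 hlam hp hC)
  have hS2 : Summable (fun x : ℕ × ℕ => F2 (x.2, x.1)) :=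
    ((Equiv.prodComm ℕ ℕ).summable_iff (f := F2)).2 (summable_A2 hlam hp hC)
  have e1 : ∑' x : ℕ × ℕ, F1 x = ∑' x : ℕ × ℕ, F1 (x.2, x.1) :=
    ((Equiv.prodComm ℕ ℕ).tsum_eq F1).symm
  have e2 : ∑' x : ℕ × ℕ, F2 x = ∑' x : ℕ × ℕ, F2 (x.2, x.1) :=
    ((Equiv.prodComm ℕ ℕ).tsum_eq F2).symm
  rw [e1, e2, Summable.tsum_prod hS1, Summable.tsum_prod hS2]
  refine tsum_congr fun k => ?_
  -- now fixed second coordinate `k`, sum over the Poisson index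
  have hg : ∀ n : ℕ, |h (n + k)| ≤ C := fun n => hC _
  calc ∑' i : ℕ, F1 (i, k)
      = ∑' i : ℕ, (pY p k * lam) * (pX lam i * h (i + 1 + k)) := by
        refine tsum_congr fun i => ?_
        show pX lam i * pY p k * (lam * h (i + k + 1)) = _
        rw [show i + 1 + k = i + k + 1 by omega]
        ring
    _ = (pY p k * lam) * ∑' i : ℕ, pX lam i * h (i + 1 + k) := tsum_mul_left
    _ = pY p k * (lam * ∑' i : ℕ, pX lam i * h (i + 1 + k)) := by ring
    _ = pY p k * ∑' i : ℕ, pX lam i * (i : ℝ) * h (i + k) := by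
        rw [poisson_step (C := C) hlam hg]
    _ = ∑' i : ℕ, pY p k * (pX lam i * (i : ℝ) * h (i + k)) := (tsum_mul_left).symm
    _ = ∑' i : ℕ, F2 (i, k) := by
        refine tsum_congr fun i => ?_
        show _ = pX lam i * pY p k * ((i : ℝ) * h (i + k))
        ring

lemma claim2 (hlam : 0 < lam) (hp : p ∈ Set.Ioo (0:ℝ) 1) (hC : ∀ j, |h j| ≤ C) :
    ∑' x : ℕ × ℕ, pX lam x.1 * pY p x.2 *
        (∑' m : ℕ, (1 - p) ^ (m + 1) * h (x.1 + x.2 + m + 1))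
      = ∑' x : ℕ × ℕ, pX lam x.1 * pY p x.2 * ((x.2 : ℝ) * h (x.1 + x.2)) := by
  rw [Summable.tsum_prod (summable_B1 hlam hp hC), Summable.tsum_prod (summable_B2 hlam hp hC)]
  refine tsum_congr fun i => ?_
  have hg : ∀ n : ℕ, |h (i + n)| ≤ C := fun n => hC _
  calc ∑' k : ℕ, pX lam i * pY p k * (∑' m : ℕ, (1 - p) ^ (m + 1) * h (i + k + m + 1))
      = ∑' k : ℕ, pX lam i * (pY p k * (∑' m : ℕ, (1 - p) ^ (m + 1) * h (i + (k + m + 1)))) := by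
        refine tsum_congr fun k => ?_
        rw [mul_assoc]
        congr 1
        congr 1
        refine tsum_congr fun m => ?_
        rw [show i + k + m + 1 = i + (k + m + 1) by omega]
    _ = pX lam i * ∑' k : ℕ, pY p k * (∑' m : ℕ, (1 - p) ^ (m + 1) * h (i + (k + m + 1))) :=
        tsum_mul_left
    _ = pX lam i * ∑' k : ℕ, pY p k * (k : ℝ) * h (i + k) := by
        rw [geom_step (C := C) hp (g := fun n => h (i + n)) hg]
    _ = ∑' k : ℕ, pX lam i * (pY p k * (k : ℝ) * h (i + k)) := (tsum_mul_left).symm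
    _ = ∑' k : ℕ, pX lam i * pY p k * ((k : ℝ) * h (i + k)) := by
        refine tsum_congr fun k => ?_
        ring

lemma main_tsum (hlam : 0 < lam) (hp : p ∈ Set.Ioo (0:ℝ) 1) (hC : ∀ j, |h j| ≤ C) :
    ∑' x : ℕ × ℕ, pX lam x.1 * pY p x.2 *
        (lam * h (x.1 + x.2 + 1) + ∑' m : ℕ, (1 - p) ^ (m + 1) * h (x.1 + x.2 + m + 1))
      = ∑' x : ℕ × ℕ, pX lam x.1 * pY p x.2 * (((x.1 + x.2 : ℕ) : ℝ) * h (x.1 + x.2)) := by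
  calc ∑' x : ℕ × ℕ, pX lam x.1 * pY p x.2 *
        (lam * h (x.1 + x.2 + 1) + ∑' m : ℕ, (1 - p) ^ (m + 1) * h (x.1 + x.2 + m + 1))
      = ∑' x : ℕ × ℕ, (pX lam x.1 * pY p x.2 * (lam * h (x.1 + x.2 + 1))
          + pX lam x.1 * pY p x.2 * (∑' m : ℕ, (1 - p) ^ (m + 1) * h (x.1 + x.2 + m + 1))) := by
        refine tsum_congr fun x => ?_; ring
    _ = ∑' x : ℕ × ℕ, pX lam x.1 * pY p x.2 * (lam * h (x.1 + x.2 + 1))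
          + ∑' x : ℕ × ℕ, pX lam x.1 * pY p x.2 *
            (∑' m : ℕ, (1 - p) ^ (m + 1) * h (x.1 + x.2 + m + 1)) :=
        Summable.tsum_add (summable_A1 hlam hp hC) (summable_B1 hlam hp hC)
    _ = ∑' x : ℕ × ℕ, pX lam x.1 * pY p x.2 * ((x.1 : ℝ) * h (x.1 + x.2))
          + ∑' x : ℕ × ℕ, pX lam x.1 * pY p x.2 * ((x.2 : ℝ) * h (x.1 + x.2)) := by
        rw [claim1 hlam hp hC, claim2 hlam hp hC]
    _ = ∑' x : ℕ × ℕ, (pX lam x.1 * pY p x.2 * ((x.1 : ℝ) * h (x.1 + x.2))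
          + pX lam x.1 * pY p x.2 * ((x.2 : ℝ) * h (x.1 + x.2))) :=
        (Summable.tsum_add (summable_A2 hlam hp hC) (summable_B2 hlam hp hC)).symm
    _ = ∑' x : ℕ × ℕ, pX lam x.1 * pY p x.2 * (((x.1 + x.2 : ℕ) : ℝ) * h (x.1 + x.2)) := by
        refine tsum_congr fun x => ?_
        push_cast
        ring

end Main

section Meas

variable {Ω : Type*} [MeasurableSpace Ω] (P : Measure Ω) [IsProbabilityMeasure P]
variable {lam p : ℝ} {X Y : Ω → ℕ}

lemma map_singleton (hX : Measurable X) (hY : Measurable Y) (hindep : IndepFun X Y P)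
    (x : ℕ × ℕ) :
    (P.map fun ω => (X ω, Y ω)) {x} = P {ω | X ω = x.1} * P {ω | Y ω = x.2} := by
  rw [Measure.map_apply (hX.prodMk hY) (measurableSet_singleton x)]
  have hset : ((fun ω => (X ω, Y ω)) ⁻¹' {x}) = X ⁻¹' {x.1} ∩ Y ⁻¹' {x.2} := by
    ext ω; simp [Prod.ext_iff]
  rw [hset, hindep.measure_inter_preimage_eq_mul _ _ (measurableSet_singleton _)
    (measurableSet_singleton _)]
  rfl

lemma integrable_aux {g : ℕ × ℕ → ℝ}
    (hkey : ∀ x : ℕ × ℕ, ((P.map fun ω => (X ω, Y ω)) {x}).toReal = pX lam x.1 * pY p x.2)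
    (hsum : Summable (fun y : ℕ × ℕ => pX lam y.1 * pY p y.2 * |g y|)) :
    Integrable g (P.map fun ω => (X ω, Y ω)) := by
  set μ := P.map fun ω => (X ω, Y ω) with hμ
  constructor
  · exact (measurable_of_countable g).aestronglyMeasurable
  · show (∫⁻ y, (‖g y‖₊ : ENNReal) ∂μ) < ⊤
    rw [lintegral_countable']
    have hterm : ∀ y : ℕ × ℕ, (‖g y‖₊ : ENNReal) * μ {y}
        = ENNReal.ofReal (pX lam y.1 * pY p y.2 * |g y|) := by
      intro y
      have h1 : μ {y} = ENNReal.ofReal (pX lam y.1 * pY p y.2) := by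
        rw [← hkey y, ENNReal.ofReal_toReal (measure_ne_top μ _)]
      have h2 : (‖g y‖₊ : ENNReal) = ENNReal.ofReal |g y| := by
        rw [← enorm_eq_nnnorm, ← ofReal_norm, Real.norm_eq_abs]
      rw [h1, h2, ← ENNReal.ofReal_mul (abs_nonneg _), mul_comm]
    have hnn : ∀ y : ℕ × ℕ, 0 ≤ pX lam y.1 * pY p y.2 * |g y| := by
      intro y
      have h0 : 0 ≤ pX lam y.1 * pY p y.2 := (hkey y) ▸ ENNReal.toReal_nonneg
      exact mul_nonneg h0 (abs_nonneg _)
    rw [tsum_congr hterm, ← ENNReal.ofReal_tsum_of_nonneg hnn hsum]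
    exact ENNReal.ofReal_lt_top

lemma integral_formula (hX : Measurable X) (hY : Measurable Y) {g : ℕ × ℕ → ℝ}
    (hint : Integrable g (P.map fun ω => (X ω, Y ω))) :
    ∫ ω, g (X ω, Y ω) ∂P
      = ∑' y : ℕ × ℕ, ((P.map fun ω => (X ω, Y ω)) {y}).toReal * g y := by
  rw [← integral_map (hX.prodMk hY).aemeasurable
    (measurable_of_countable g).aestronglyMeasurable, integral_countable' hint]
  simp [smul_eq_mul, Measure.real]

end Meas

end SteinAux


open SteinAux in
/-- Proposition 3.2: the operator `𝒜 h(j) = λ h(j+1) − j h(j) + ∑_k q^{k+1} h(j+k+1)` is a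
Stein operator for `Z = X + Y`, with `X` Poisson(λ) and `Y` an independent geometric(p). -/
theorem stein_operator_poisson_geometric {Ω : Type*} [MeasurableSpace Ω] (P : Measure Ω)
    [IsProbabilityMeasure P] (lam p : ℝ) (hlam : 0 < lam) (hp : p ∈ Set.Ioo (0 : ℝ) 1)
    (X Y : Ω → ℕ) (hX : Measurable X) (hY : Measurable Y)
    (hXpmf : ∀ k : ℕ, pm P X k = Real.exp (-lam) * lam ^ k / k.factorial)
    (hYpmf : ∀ k : ℕ, pm P Y k = (1 - p) ^ k * p)
    (hindep : IndepFun X Y P)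
    (h : ℕ → ℝ) (hbdd : ∃ C, ∀ j, |h j| ≤ C) :
    ∫ ω, (lam * h (X ω + Y ω + 1) + ∑' k : ℕ, (1 - p) ^ (k + 1) * h (X ω + Y ω + k + 1)) ∂P =
      ∫ ω, ((X ω + Y ω : ℕ) : ℝ) * h (X ω + Y ω) ∂P := by
  obtain ⟨C, hC⟩ := hbdd
  have hC0 : 0 ≤ C := le_trans (abs_nonneg _) (hC 0)
  have hkey : ∀ x : ℕ × ℕ,
      ((P.map fun ω => (X ω, Y ω)) {x}).toReal = pX lam x.1 * pY p x.2 := by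
    intro x
    rw [map_singleton P hX hY hindep x, ENNReal.toReal_mul]
    have h1 := hXpmf x.1
    have h2 := hYpmf x.2
    unfold pm at h1 h2
    rw [h1, h2]
    rfl
  -- the two integrands, as functions on `ℕ × ℕ`
  let g1 : ℕ × ℕ → ℝ := fun y =>
    lam * h (y.1 + y.2 + 1) + ∑' m : ℕ, (1 - p) ^ (m + 1) * h (y.1 + y.2 + m + 1)
  let g2 : ℕ × ℕ → ℝ := fun y => ((y.1 + y.2 : ℕ) : ℝ) * h (y.1 + y.2)
  have hpXY := summable_pXY hlam hp
  have hnnXY : ∀ y : ℕ × ℕ, 0 ≤ pX lam y.1 * pY p y.2 :=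
    fun y => mul_nonneg (pX_nonneg hlam _) (pY_nonneg hp _)
  -- summability for integrability
  have hs1 : Summable (fun y : ℕ × ℕ => pX lam y.1 * pY p y.2 * |g1 y|) := by
    have hg1b : ∀ y : ℕ × ℕ, |g1 y| ≤ lam * C + C * (1 - p) * (1 - (1 - p))⁻¹ := by
      intro y
      refine (abs_add_le _ _).trans (add_le_add ?_ (inner_bound hp hC _))
      rw [abs_mul, abs_of_pos hlam]
      exact mul_le_mul_of_nonneg_left (hC _) hlam.le
    refine Summable.of_nonneg_of_le
      (fun y => mul_nonneg (hnnXY y) (abs_nonneg _)) (fun y => ?_)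
      (hpXY.mul_left (lam * C + C * (1 - p) * (1 - (1 - p))⁻¹))
    calc pX lam y.1 * pY p y.2 * |g1 y|
        ≤ pX lam y.1 * pY p y.2 * (lam * C + C * (1 - p) * (1 - (1 - p))⁻¹) :=
          mul_le_mul_of_nonneg_left (hg1b y) (hnnXY y)
      _ = (lam * C + C * (1 - p) * (1 - (1 - p))⁻¹) * (pX lam y.1 * pY p y.2) := by ring
  have hs2 : Summable (fun y : ℕ × ℕ => pX lam y.1 * pY p y.2 * |g2 y|) := by
    have hmaj : Summable (fun y : ℕ × ℕ =>
        C * ((y.1 : ℝ) * (pX lam y.1 * pY p y.2)) + C * ((y.2 : ℝ) * (pX lam y.1 * pY p y.2))) :=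
      ((summable_pXY_fst hlam hp).mul_left C).add ((summable_pXY_snd hlam hp).mul_left C)
    refine Summable.of_nonneg_of_le
      (fun y => mul_nonneg (hnnXY y) (abs_nonneg _)) (fun y => ?_) hmaj
    have hb : |g2 y| ≤ ((y.1 : ℝ) + (y.2 : ℝ)) * C := by
      show |((y.1 + y.2 : ℕ) : ℝ) * h (y.1 + y.2)| ≤ _
      rw [abs_mul, abs_of_nonneg (Nat.cast_nonneg _), Nat.cast_add]
      exact mul_le_mul_of_nonneg_left (hC _) (by positivity)
    calc pX lam y.1 * pY p y.2 * |g2 y|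
        ≤ pX lam y.1 * pY p y.2 * (((y.1 : ℝ) + (y.2 : ℝ)) * C) :=
          mul_le_mul_of_nonneg_left hb (hnnXY y)
      _ = C * ((y.1 : ℝ) * (pX lam y.1 * pY p y.2))
          + C * ((y.2 : ℝ) * (pX lam y.1 * pY p y.2)) := by ring
  have hint1 : Integrable g1 (P.map fun ω => (X ω, Y ω)) := integrable_aux P hkey hs1
  have hint2 : Integrable g2 (P.map fun ω => (X ω, Y ω)) := integrable_aux P hkey hs2
  have key1 : ∫ ω, g1 (X ω, Y ω) ∂P = ∑' y : ℕ × ℕ, pX lam y.1 * pY p y.2 * g1 y := by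
    rw [integral_formula P hX hY hint1]
    exact tsum_congr fun y => by rw [hkey y]
  have key2 : ∫ ω, g2 (X ω, Y ω) ∂P = ∑' y : ℕ × ℕ, pX lam y.1 * pY p y.2 * g2 y := by
    rw [integral_formula P hX hY hint2]
    exact tsum_congr fun y => by rw [hkey y]
  show ∫ ω, g1 (X ω, Y ω) ∂P = ∫ ω, g2 (X ω, Y ω) ∂P
  rw [key1, key2]
  exact main_tsum hlam hp hC
end

section
/- Let ξ₁,…,ξₙ be independent Bernoulli random variables with P(ξᵢ = 1) = pᵢ = 1 − P(ξᵢ = 0), where pᵢ ∈ [0,1], set Wₙ = ξ₁ + ⋯ + ξₙ and μ = ∑_{i=1}^{n} pᵢ, and assume μ > 0. Let X be a Poisson random variable with parameter μ. Then d_TV(Wₙ, X) ≤ (∑_{i=1}^{n} pᵢ²) / max(1, μ). -/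
open MeasureTheory ProbabilityTheory Finset

/-- Total variation distance between the laws of two `ℕ`-valued random variables. -/
noncomputable def dTV {Ω : Type*} [MeasurableSpace Ω] (P : Measure Ω) (X Y : Ω → ℕ) : ℝ :=
  (1 / 2) * ∑' j : ℕ, |pm P X j - pm P Y j|

set_option maxHeartbeats 1000000

noncomputable def pois (l : ℝ) (k : ℕ) : ℝ := Real.exp (-l) * l ^ k / (Nat.factorial k)

noncomputable def pcdf (l : ℝ) (k : ℕ) : ℝ := ∑ i ∈ Finset.range (k+1), pois l i

lemma pois_pos {l : ℝ} (hl : 0 < l) (k : ℕ) : 0 < pois l k := by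
  apply div_pos (mul_pos (Real.exp_pos _) (pow_pos hl _))
  exact_mod_cast Nat.factorial_pos k

lemma summable_pois (l : ℝ) : Summable (pois l) := by
  have := Real.summable_pow_div_factorial l
  have h2 := this.mul_left (Real.exp (-l))
  apply h2.congr
  intro k
  simp [pois, mul_div_assoc]

lemma tsum_pois {l : ℝ} : ∑' k, pois l k = 1 := by
  have h1 : ∑' k : ℕ, l ^ k / (Nat.factorial k : ℝ) = Real.exp l := by
    rw [Real.exp_eq_exp_ℝ, NormedSpace.exp_eq_tsum_div]
  have : ∑' k, pois l k = Real.exp (-l) * ∑' k : ℕ, l ^ k / (Nat.factorial k : ℝ) := by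
    rw [← tsum_mul_left]; simp [pois, mul_div_assoc]
  rw [this, h1, ← Real.exp_add]; simp

lemma pois_succ (l : ℝ) (k : ℕ) : (k+1 : ℝ) * pois l (k+1) = l * pois l k := by
  simp only [pois, Nat.factorial_succ, pow_succ]
  push_cast
  field_simp

noncomputable def steinF (l : ℝ) (h : ℕ → ℝ) : ℕ → ℝ
  | 0 => 0
  | (k+1) => ((∑ j ∈ Finset.range (k+1), h j * pois l j)
      - (∑' j, h j * pois l j) * pcdf l k) / (l * pois l k)

lemma stein_eq {l : ℝ} (hl : 0 < l) (h : ℕ → ℝ) (k : ℕ) :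
    l * steinF l h (k+1) - k * steinF l h k = h k - ∑' j, h j * pois l j := by
  cases k with
  | zero =>
      have h0 : pois l 0 ≠ 0 := (pois_pos hl 0).ne'
      simp only [steinF, pcdf]
      simp only [Finset.sum_range_one, Nat.cast_zero, zero_mul, sub_zero]
      field_simp
      simp only [zero_add, Finset.sum_range_one]
      ring
  | succ k =>
      have ha : pois l k ≠ 0 := (pois_pos hl k).ne'
      have hb : pois l (k+1) ≠ 0 := (pois_pos hl (k+1)).ne'
      have hrec := pois_succ l k
      have hsum : (∑ j ∈ Finset.range (k+2), h j * pois l j)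
          = (∑ j ∈ Finset.range (k+1), h j * pois l j) + h (k+1) * pois l (k+1) :=
        Finset.sum_range_succ _ _
      have hcdf : pcdf l (k+1) = pcdf l k + pois l (k+1) := Finset.sum_range_succ _ _
      simp only [steinF, hsum, hcdf]
      set S := ∑ j ∈ Finset.range (k+1), h j * pois l j with hS
      set Ph := ∑' j, h j * pois l j with hPh
      set a := pois l k
      set b := pois l (k+1)
      have hl' : l ≠ 0 := hl.ne'
      push_cast
      rw [mul_div_assoc', mul_div_assoc',
        div_sub_div _ _ (by positivity : l * b ≠ 0) (by positivity : l * a ≠ 0),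
        div_eq_iff (by positivity : l * b * (l * a) ≠ 0)]
      linear_combination (-(l * (S - Ph * pcdf l k))) * hrec

lemma summable_shift (l : ℝ) (m : ℕ) : Summable (fun i => pois l (i + m)) :=
  (summable_nat_add_iff m).2 (summable_pois l)

lemma pcdf_nonneg {l : ℝ} (hl : 0 < l) (k : ℕ) : 0 ≤ pcdf l k :=
  Finset.sum_nonneg fun i _ => (pois_pos hl i).le

lemma pcdf_le_one {l : ℝ} (hl : 0 < l) (k : ℕ) : pcdf l k ≤ 1 := by
  rw [← tsum_pois (l := l)]
  exact Summable.sum_le_tsum _ (fun i _ => (pois_pos hl i).le) (summable_pois l)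

lemma one_sub_pcdf {l : ℝ} (k : ℕ) : 1 - pcdf l k = ∑' i, pois l (i + (k+1)) := by
  have := Summable.sum_add_tsum_nat_add (f := pois l) (k+1) (summable_pois l)
  rw [← tsum_pois (l := l)]
  rw [pcdf]
  linarith [this]

/-- `(1 - Π_{k+1})/π_{k+1} ≤ (1 - Π_k)/π_k` in cross-multiplied form. -/
lemma D1 {l : ℝ} (hl : 0 < l) (k : ℕ) :
    pois l k * (1 - pcdf l (k+1)) ≤ pois l (k+1) * (1 - pcdf l k) := by
  rw [one_sub_pcdf, one_sub_pcdf, ← tsum_mul_left, ← tsum_mul_left]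
  apply Summable.tsum_le_tsum _ ((summable_shift l (k+2)).mul_left _) ((summable_shift l (k+1)).mul_left _)
  intro i
  have e1 := pois_succ l (k+1+i)
  have e2 := pois_succ l k
  have p1 := pois_pos hl (k+1+i)
  have p2 := pois_pos hl k
  have p3 := pois_pos hl (k+2+i)
  have p4 := pois_pos hl (k+1)
  have hi : (i + (k+1+1) : ℕ) = (k+1+i)+1 := by omega
  have hi2 : (i + (k+1) : ℕ) = k+1+i := by omega
  rw [hi, hi2]
  -- goal : pois l k * pois l (k+1+i+1) ≤ pois l (k+1) * pois l (k+1+i)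
  have hk1 : (0:ℝ) < (k:ℝ)+1 := by positivity
  have hk2 : (0:ℝ) < (k:ℝ)+1+i+1 := by positivity
  push_cast at e1 e2
  have h1 : pois l (k+1+i+1) = l * pois l (k+1+i) / ((k:ℝ)+1+(i:ℝ)+1) := by
    rw [eq_div_iff hk2.ne']; linarith [e1]
  have h2 : pois l (k+1) = l * pois l k / ((k:ℝ)+1) := by
    rw [eq_div_iff hk1.ne']; linarith [e2]
  rw [h1, h2, mul_div_assoc', div_mul_eq_mul_div, div_le_div_iff₀ hk2 hk1]
  nlinarith [mul_nonneg (mul_nonneg (mul_pos hl p2).le p1.le) (Nat.cast_nonneg i : (0:ℝ) ≤ i),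
    mul_pos (mul_pos hl p2) p1]

/-- `Π_k/π_{k+1} ≤ Π_{k+1}/π_k` in cross-multiplied form. -/
lemma D2 {l : ℝ} (hl : 0 < l) (k : ℕ) :
    pois l (k+1) * pcdf l k ≤ pois l k * pcdf l (k+1) := by
  have step : ∀ i, i ≤ k → pois l (k+1) * pois l i ≤ pois l k * pois l (i+1) := by
    intro i hik
    have e1 := pois_succ l k
    have e2 := pois_succ l i
    have p1 := pois_pos hl i
    have p2 := pois_pos hl k
    have p3 := pois_pos hl (i+1)
    have p4 := pois_pos hl (k+1)
    have hik0 : (i:ℝ) ≤ (k:ℝ) := by exact_mod_cast hik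
    have hik' : (i:ℝ) + 1 ≤ (k:ℝ) + 1 := by linarith
    push_cast at e1 e2
    nlinarith [mul_pos p2 p3]
  calc pois l (k+1) * pcdf l k = ∑ i ∈ Finset.range (k+1), pois l (k+1) * pois l i := by
        rw [pcdf, Finset.mul_sum]
    _ ≤ ∑ i ∈ Finset.range (k+1), pois l k * pois l (i+1) := by
        apply Finset.sum_le_sum
        intro i hi
        exact step i (by simpa using Nat.lt_succ_iff.mp (Finset.mem_range.mp hi))
    _ = pois l k * ∑ i ∈ Finset.range (k+1), pois l (i+1) := by rw [Finset.mul_sum]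
    _ ≤ pois l k * pcdf l (k+1) := by
        apply mul_le_mul_of_nonneg_left _ (pois_pos hl k).le
        rw [pcdf, Finset.sum_range_succ' (fun i => pois l i) (k+1)]
        nlinarith [pois_pos hl 0]

/-- key: `l·Π_k ≤ (k+1)·(Π_{k+1} − π₀)`. -/
lemma L3 {l : ℝ} (hl : 0 < l) (k : ℕ) :
    l * pcdf l k ≤ ((k:ℝ)+1) * (pcdf l (k+1) - pois l 0) := by
  have : l * pcdf l k = ∑ i ∈ Finset.range (k+1), ((i:ℝ)+1) * pois l (i+1) := by
    rw [pcdf, Finset.mul_sum]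
    exact Finset.sum_congr rfl fun i _ => (pois_succ l i).symm
  rw [this]
  have h2 : pcdf l (k+1) - pois l 0 = ∑ i ∈ Finset.range (k+1), pois l (i+1) := by
    rw [pcdf, Finset.sum_range_succ' (fun i => pois l i) (k+1)]; ring
  rw [h2, Finset.mul_sum]
  apply Finset.sum_le_sum
  intro i hi
  have hik0 : (i:ℝ) ≤ (k:ℝ) := by exact_mod_cast Nat.lt_succ_iff.mp (Finset.mem_range.mp hi)
  have hik : (i:ℝ) + 1 ≤ (k:ℝ) + 1 := by linarith
  nlinarith [pois_pos hl (i+1)]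

lemma summable_hpois {l : ℝ} (hl : 0 < l) {h : ℕ → ℝ} (h0 : ∀ j, 0 ≤ h j) (h1 : ∀ j, h j ≤ 1) :
    Summable (fun j => h j * pois l j) := by
  apply Summable.of_nonneg_of_le (fun j => mul_nonneg (h0 j) (pois_pos hl j).le)
    (fun j => ?_) (summable_pois l)
  calc h j * pois l j ≤ 1 * pois l j := by
        apply mul_le_mul_of_nonneg_right (h1 j) (pois_pos hl j).le
    _ = pois l j := one_mul _

lemma tail_nonneg {l : ℝ} (hl : 0 < l) {h : ℕ → ℝ} (h0 : ∀ j, 0 ≤ h j) (h1 : ∀ j, h j ≤ 1)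
    (m : ℕ) : 0 ≤ (∑' j, h j * pois l j) - ∑ j ∈ Finset.range m, h j * pois l j := by
  have := Summable.sum_add_tsum_nat_add (f := fun j => h j * pois l j) m (summable_hpois hl h0 h1)
  have ht : 0 ≤ ∑' i, h (i + m) * pois l (i + m) :=
    tsum_nonneg (fun i => mul_nonneg (h0 _) (pois_pos hl _).le)
  linarith [this, ht]

lemma tail_le {l : ℝ} (hl : 0 < l) {h : ℕ → ℝ} (h0 : ∀ j, 0 ≤ h j) (h1 : ∀ j, h j ≤ 1)
    (m : ℕ) : (∑' j, h j * pois l j) - ∑ j ∈ Finset.range m, h j * pois l j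
      ≤ 1 - ∑ j ∈ Finset.range m, pois l j := by
  have e1 := Summable.sum_add_tsum_nat_add (f := fun j => h j * pois l j) m (summable_hpois hl h0 h1)
  have e2 := Summable.sum_add_tsum_nat_add (f := pois l) m (summable_pois l)
  have e3 : (∑' i : ℕ, pois l i) = 1 := tsum_pois
  have ht : (∑' i, h (i + m) * pois l (i + m)) ≤ ∑' i, pois l (i + m) := by
    apply Summable.tsum_le_tsum _ ((summable_nat_add_iff (f := fun j => h j * pois l j) m).2
      (summable_hpois hl h0 h1)) (summable_shift l m)
    intro i
    calc h (i+m) * pois l (i+m) ≤ 1 * pois l (i+m) :=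
          mul_le_mul_of_nonneg_right (h1 _) (pois_pos hl _).le
      _ = pois l (i+m) := one_mul _
  linarith [e1, e2, ht]

lemma stein_alg (l a b Pk S Ph hk1 : ℝ) (ha : a ≠ 0) (hb : b ≠ 0) (hl : l ≠ 0) :
    l * ((S + hk1*b - Ph*(Pk+b))/(l*b) - (S - Ph*Pk)/(l*a))
      = S*((1-(Pk+b))/b - (1-Pk)/a) - (Ph - S - hk1*b)*((Pk+b)/b - Pk/a)
        + hk1*((1-(Pk+b)) + b*Pk/a) := by
  field_simp
  ring

lemma stein_delta_le {l : ℝ} (hl : 0 < l) {h : ℕ → ℝ} (h0 : ∀ j, 0 ≤ h j) (h1 : ∀ j, h j ≤ 1)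
    (k : ℕ) : l * (steinF l h (k+2) - steinF l h (k+1)) ≤ 1 - Real.exp (-l) := by
  have ha := pois_pos hl k
  have hb := pois_pos hl (k+1)
  have hrec := pois_succ l k
  set a := pois l k with ha'
  set b := pois l (k+1) with hb'
  set Pk := pcdf l k with hPk
  set S := ∑ j ∈ Finset.range (k+1), h j * pois l j with hS
  set Ph := ∑' j, h j * pois l j with hPh
  have hcdf : pcdf l (k+1) = Pk + b := Finset.sum_range_succ _ _
  have hsum : (∑ j ∈ Finset.range (k+2), h j * pois l j) = S + h (k+1) * b :=
    Finset.sum_range_succ _ _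
  have f2 : steinF l h (k+2) = (S + h (k+1) * b - Ph * (Pk + b))/(l*b) := by
    show ((∑ j ∈ Finset.range (k+2), h j * pois l j)
        - (∑' j, h j * pois l j) * pcdf l (k+1)) / (l * pois l (k+1)) = _
    rw [hsum, ← hPh, ← hb', hcdf]
  have f1 : steinF l h (k+1) = (S - Ph*Pk)/(l*a) := by
    show ((∑ j ∈ Finset.range (k+1), h j * pois l j)
        - (∑' j, h j * pois l j) * pcdf l k) / (l * pois l k) = _
    rw [← hS, ← hPh, ← ha', ← hPk]
  have hident := stein_alg l a b Pk S Ph (h (k+1)) ha.ne' hb.ne' hl.ne'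
  rw [f2, f1, hident]
  have hS0 : 0 ≤ S := Finset.sum_nonneg fun j _ => mul_nonneg (h0 j) (pois_pos hl j).le
  have hT0 : 0 ≤ Ph - S - h (k+1) * b := by
    have := tail_nonneg hl h0 h1 (k+2)
    rw [← hPh, hsum] at this
    linarith
  have hd1 : (1-(Pk+b))/b - (1-Pk)/a ≤ 0 := by
    rw [sub_nonpos, div_le_div_iff₀ hb ha]
    have := D1 hl k
    rw [← ha', ← hb', ← hPk, hcdf] at this
    linarith
  have hd2 : 0 ≤ (Pk+b)/b - Pk/a := by
    rw [sub_nonneg, div_le_div_iff₀ ha hb]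
    have := D2 hl k
    rw [← ha', ← hb', ← hPk, hcdf] at this
    linarith
  have hPk0 : 0 ≤ Pk := pcdf_nonneg hl k
  have hPk11 : Pk + b ≤ 1 := by rw [← hcdf]; exact pcdf_le_one hl (k+1)
  have hq0 : 0 ≤ b * Pk / a := div_nonneg (mul_nonneg hb.le hPk0) ha.le
  have hbr0 : 0 ≤ (1-(Pk+b)) + b * Pk / a := by linarith
  have hbr : (1-(Pk+b)) + b * Pk / a ≤ 1 - Real.exp (-l) := by
    have hb_div : b * Pk / a = l * Pk / ((k:ℝ)+1) := by
      rw [div_eq_div_iff ha.ne' (by positivity : ((k:ℝ)+1) ≠ (0:ℝ))]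
      linear_combination Pk * hrec
    have hl3 := L3 hl k
    rw [← hPk, hcdf] at hl3
    have hp0 : pois l 0 = Real.exp (-l) := by simp [pois]
    rw [hp0] at hl3
    rw [hb_div]
    have hdiv : l * Pk / ((k:ℝ)+1) ≤ (Pk + b) - Real.exp (-l) := by
      rw [div_le_iff₀ (by positivity : (0:ℝ) < (k:ℝ)+1)]
      linarith
    linarith
  have t1 : S * ((1-(Pk+b))/b - (1-Pk)/a) ≤ 0 := mul_nonpos_of_nonneg_of_nonpos hS0 hd1
  have t2 : 0 ≤ (Ph - S - h (k+1) * b) * ((Pk+b)/b - Pk/a) := mul_nonneg hT0 hd2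
  have t3 : h (k+1) * ((1-(Pk+b)) + b * Pk / a) ≤ 1 * ((1-(Pk+b)) + b * Pk / a) :=
    mul_le_mul_of_nonneg_right (h1 _) hbr0
  nlinarith [t1, t2, t3, hbr]

lemma steinF_one_sub {l : ℝ} (hl : 0 < l) {h : ℕ → ℝ} (h0 : ∀ j, 0 ≤ h j) (h1 : ∀ j, h j ≤ 1)
    (k : ℕ) : steinF l (fun j => 1 - h j) k = - steinF l h k := by
  cases k with
  | zero => simp [steinF]
  | succ k =>
      have htsub : (∑' j, (1 - h j) * pois l j) = 1 - ∑' j, h j * pois l j := by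
        have e1 : (∑' j, ((fun j => pois l j) j - (fun j => h j * pois l j) j))
            = (∑' j, pois l j) - ∑' j, h j * pois l j :=
          Summable.tsum_sub (summable_pois l) (summable_hpois hl h0 h1)
        have e2 : ∀ j : ℕ, (1 - h j) * pois l j = pois l j - h j * pois l j := by
          intro j; ring
        rw [tsum_congr e2]
        rw [e1, tsum_pois]
      have hssub : (∑ j ∈ Finset.range (k+1), (1 - h j) * pois l j)
          = pcdf l k - ∑ j ∈ Finset.range (k+1), h j * pois l j := by
        rw [pcdf, ← Finset.sum_sub_distrib]
        exact Finset.sum_congr rfl fun j _ => by ring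
      show ((∑ j ∈ Finset.range (k+1), (1 - h j) * pois l j)
          - (∑' j, (1 - h j) * pois l j) * pcdf l k) / (l * pois l k) = _
      rw [htsub, hssub]
      show _ = -(((∑ j ∈ Finset.range (k+1), h j * pois l j)
          - (∑' j, h j * pois l j) * pcdf l k) / (l * pois l k))
      rw [← neg_div]
      congr 1
      ring

lemma stein_delta_abs {l : ℝ} (hl : 0 < l) {h : ℕ → ℝ} (h0 : ∀ j, 0 ≤ h j) (h1 : ∀ j, h j ≤ 1)
    (k : ℕ) : |steinF l h (k+2) - steinF l h (k+1)| ≤ (1 - Real.exp (-l)) / l := by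
  rw [abs_le]
  constructor
  · have h0' : ∀ j, 0 ≤ 1 - h j := fun j => by linarith [h1 j]
    have h1' : ∀ j, 1 - h j ≤ 1 := fun j => by linarith [h0 j]
    have := stein_delta_le hl h0' h1' k
    rw [steinF_one_sub hl h0 h1, steinF_one_sub hl h0 h1] at this
    have h2 : -(steinF l h (k+2) - steinF l h (k+1)) ≤ (1 - Real.exp (-l)) / l := by
      rw [le_div_iff₀ hl]
      nlinarith [this]
    linarith
  · have := stein_delta_le hl h0 h1 k
    rw [le_div_iff₀ hl]
    nlinarith [this]

lemma integrable_comp_nat {Ω : Type*} [MeasurableSpace Ω] (P : Measure Ω) [IsProbabilityMeasure P]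
    {Y : Ω → ℕ} (hY : Measurable Y) (N : ℕ) (hbd : ∀ᵐ ω ∂P, Y ω ≤ N) (g : ℕ → ℝ) :
    Integrable (fun ω => g (Y ω)) P := by
  have hmg : Measurable fun ω => g (Y ω) := measurable_from_top.comp hY
  apply Integrable.mono' (integrable_const (∑ k ∈ Finset.range (N+1), |g k|))
    hmg.aestronglyMeasurable
  filter_upwards [hbd] with ω hω
  rw [Real.norm_eq_abs]
  exact Finset.single_le_sum (f := fun k => |g k|) (fun k _ => abs_nonneg _)
    (Finset.mem_range.2 (Nat.lt_succ_of_le hω))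

lemma integrable_comp_nat2 {Ω : Type*} [MeasurableSpace Ω] (P : Measure Ω) [IsProbabilityMeasure P]
    {Y Z : Ω → ℕ} (hY : Measurable Y) (hZ : Measurable Z) (N M : ℕ)
    (hbdY : ∀ᵐ ω ∂P, Y ω ≤ N) (hbdZ : ∀ᵐ ω ∂P, Z ω ≤ M) (g g' : ℕ → ℝ) :
    Integrable (fun ω => g (Y ω) * g' (Z ω)) P := by
  have hmg : Measurable fun ω => g (Y ω) * g' (Z ω) :=
    (measurable_from_top.comp hY).mul (measurable_from_top.comp hZ)
  apply Integrable.mono'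
    (integrable_const ((∑ k ∈ Finset.range (N+1), |g k|) * (∑ k ∈ Finset.range (M+1), |g' k|)))
    hmg.aestronglyMeasurable
  filter_upwards [hbdY, hbdZ] with ω hY' hZ'
  rw [Real.norm_eq_abs, abs_mul]
  have b1 : |g (Y ω)| ≤ ∑ k ∈ Finset.range (N+1), |g k| :=
    Finset.single_le_sum (f := fun k => |g k|) (fun k _ => abs_nonneg _)
      (Finset.mem_range.2 (Nat.lt_succ_of_le hY'))
  have b2 : |g' (Z ω)| ≤ ∑ k ∈ Finset.range (M+1), |g' k| :=
    Finset.single_le_sum (f := fun k => |g' k|) (fun k _ => abs_nonneg _)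
      (Finset.mem_range.2 (Nat.lt_succ_of_le hZ'))
  exact mul_le_mul b1 b2 (abs_nonneg _) ((abs_nonneg _).trans b1)

lemma bernoulli_ae {Ω : Type*} [MeasurableSpace Ω] (P : Measure Ω) [IsProbabilityMeasure P]
    {Y : Ω → ℕ} (hY : Measurable Y) {q : ℝ}
    (h1 : (P {ω | Y ω = 1}).toReal = q) (h0 : (P {ω | Y ω = 0}).toReal = 1 - q) :
    ∀ᵐ ω ∂P, Y ω = 0 ∨ Y ω = 1 := by
  set S0 := {ω | Y ω = 0} with hS0
  set S1 := {ω | Y ω = 1} with hS1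
  have hm0 : MeasurableSet S0 := hY (measurableSet_singleton 0)
  have hm1 : MeasurableSet S1 := hY (measurableSet_singleton 1)
  have hdisj : Disjoint S0 S1 := by
    rw [Set.disjoint_left]
    intro ω hω0 hω1
    simp only [hS0, hS1, Set.mem_setOf_eq] at hω0 hω1
    omega
  have hunion : P (S0 ∪ S1) = P S0 + P S1 := measure_union hdisj hm1
  have htr : (P (S0 ∪ S1)).toReal = 1 := by
    rw [hunion, ENNReal.toReal_add (measure_ne_top P S0) (measure_ne_top P S1), h0, h1]
    ring
  have hone : P (S0 ∪ S1) = 1 := by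
    have := ENNReal.toReal_eq_one_iff (P (S0 ∪ S1))
    exact this.mp htr
  have hcompl : P (S0 ∪ S1)ᶜ = 0 := by
    rw [prob_compl_eq_zero_iff (hm0.union hm1)]
    exact hone
  rw [ae_iff]
  apply measure_mono_null _ hcompl
  intro ω hω
  simp only [Set.mem_setOf_eq, not_or] at hω
  simp only [Set.mem_compl_iff, Set.mem_union, hS0, hS1, Set.mem_setOf_eq]
  omega

lemma indep_mul_int {Ω : Type*} [MeasurableSpace Ω] (P : Measure Ω) [IsProbabilityMeasure P]
    {Y Z : Ω → ℕ} (hY : Measurable Y) (hZ : Measurable Z) (N M : ℕ)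
    (bY : ∀ᵐ ω ∂P, Y ω ≤ N) (bZ : ∀ᵐ ω ∂P, Z ω ≤ M)
    (hind : IndepFun Y Z P) (g g' : ℕ → ℝ) :
    ∫ ω, g (Y ω) * g' (Z ω) ∂P = (∫ ω, g (Y ω) ∂P) * ∫ ω, g' (Z ω) ∂P := by
  have hI := (hind.comp (measurable_from_top (f := g)) (measurable_from_top (f := g')))
  have := hI.integral_mul_eq_mul_integral
    (integrable_comp_nat P hY N bY g).aestronglyMeasurable (integrable_comp_nat P hZ M bZ g').aestronglyMeasurable
  simpa [Function.comp] using this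

/-- Remark 3(a): Poisson approximation to a sum of independent Bernoulli random variables:
`d_TV(Wₙ, Po(μ)) ≤ (∑ pᵢ²) / max(1, μ)`. -/
theorem poisson_approximation_bernoulli {Ω : Type*} [MeasurableSpace Ω] (P : Measure Ω)
    [IsProbabilityMeasure P] (n : ℕ) (ξ : Fin n → Ω → ℕ) (hmeas : ∀ i, Measurable (ξ i))
    (hindep : iIndepFun ξ P)
    (p : Fin n → ℝ) (hp : ∀ i, p i ∈ Set.Icc (0 : ℝ) 1)
    (hpmf1 : ∀ i, pm P (ξ i) 1 = p i)
    (hpmf0 : ∀ i, pm P (ξ i) 0 = 1 - p i)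
    (μ : ℝ) (hμdef : μ = ∑ i, p i) (hμpos : 0 < μ)
    (X : Ω → ℕ) (hX : Measurable X)
    (hXpmf : ∀ k : ℕ, pm P X k = Real.exp (-μ) * μ ^ k / k.factorial) :
    dTV P (fun ω => ∑ i, ξ i ω) X ≤ (∑ i, (p i) ^ 2) / max 1 μ := by

  classical
  set W : Ω → ℕ := fun ω => ∑ i, ξ i ω with hWdef
  have hWmeas : Measurable W := Finset.measurable_sum _ (fun i _ => hmeas i)
  have hber : ∀ i, ∀ᵐ ω ∂P, ξ i ω = 0 ∨ ξ i ω = 1 :=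
    fun i => bernoulli_ae P (hmeas i) (hpmf1 i) (hpmf0 i)
  have hxibd : ∀ i, ∀ᵐ ω ∂P, ξ i ω ≤ 1 := by
    intro i; filter_upwards [hber i] with ω hω; omega
  have hWbd : ∀ᵐ ω ∂P, W ω ≤ n := by
    have hall : ∀ᵐ ω ∂P, ∀ i, ξ i ω ≤ 1 := (ae_all_iff).2 hxibd
    filter_upwards [hall] with ω hω
    calc W ω ≤ ∑ _i : Fin n, 1 := Finset.sum_le_sum (fun i _ => hω i)
      _ = n := by simp
  set Wi : Fin n → Ω → ℕ := fun i ω => ∑ j ∈ Finset.univ.erase i, ξ j ω with hWidef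
  have hWimeas : ∀ i, Measurable (Wi i) :=
    fun i => Finset.measurable_sum _ (fun j _ => hmeas j)
  have hWibd : ∀ i, ∀ᵐ ω ∂P, Wi i ω ≤ n := by
    intro i
    have hall : ∀ᵐ ω ∂P, ∀ j, ξ j ω ≤ 1 := (ae_all_iff).2 hxibd
    filter_upwards [hall] with ω hω
    calc Wi i ω ≤ ∑ _j ∈ Finset.univ.erase i, 1 :=
          Finset.sum_le_sum (fun j _ => hω j)
      _ ≤ n := by
          simp only [Finset.sum_const, smul_eq_mul, mul_one]
          calc (Finset.univ.erase i).card ≤ (Finset.univ : Finset (Fin n)).card :=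
                Finset.card_le_card (Finset.erase_subset _ _)
            _ = n := by simp
  have hdecomp : ∀ i ω, W ω = Wi i ω + ξ i ω := by
    intro i ω
    rw [hWdef, hWidef]
    exact (Finset.sum_erase_add Finset.univ _ (Finset.mem_univ i)).symm
  have hindepi : ∀ i, IndepFun (ξ i) (Wi i) P := by
    intro i
    have := hindep.indepFun_finsetSum_of_notMem hmeas (Finset.notMem_erase i Finset.univ)
    have h2 : (∑ j ∈ Finset.univ.erase i, ξ j) = Wi i := by
      funext ω; rw [hWidef]; simp [Finset.sum_apply]
    rw [h2] at this
    exact this.symm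
  set a : ℕ → ℝ := pm P W with hadef
  set b : ℕ → ℝ := fun j => pois μ j with hbdef
  have hbX : ∀ j, pm P X j = b j := by
    intro j; rw [hXpmf j, hbdef]; rfl
  have ha0 : ∀ j, 0 ≤ a j := fun j => ENNReal.toReal_nonneg
  have hb0 : ∀ j, 0 < b j := fun j => pois_pos hμpos j
  have hnullW : P {ω | ¬ W ω ≤ n} = 0 := by
    rw [← ae_iff]; exact hWbd
  have hagt : ∀ j, n < j → a j = 0 := by
    intro j hj
    have hsub : {ω | W ω = j} ⊆ {ω | ¬ W ω ≤ n} := by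
      intro ω hω
      simp only [Set.mem_setOf_eq] at *
      omega
    have : P {ω | W ω = j} = 0 := measure_mono_null hsub hnullW
    rw [hadef]
    show (P {ω | W ω = j}).toReal = 0
    rw [this]; rfl
  have hasupp : ∀ j ∉ Finset.range (n+1), a j = 0 := by
    intro j hj
    exact hagt j (by simpa [Nat.lt_succ_iff] using hj)
  have hasum : Summable a := summable_of_ne_finset_zero hasupp
  have hbsum : Summable b := summable_pois μ
  have hbtsum : ∑' j, b j = 1 := tsum_pois
  have hatsum : ∑' j, a j = 1 := by
    rw [tsum_eq_sum hasupp]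
    have hdisj : (↑(Finset.range (n+1)) : Set ℕ).PairwiseDisjoint
        (fun j => {ω | W ω = j}) := by
      intro x _ y _ hxy
      rw [Function.onFun, Set.disjoint_left]
      intro ω hx hy
      simp only [Set.mem_setOf_eq] at hx hy
      omega
    have hmeasj : ∀ j ∈ Finset.range (n+1), MeasurableSet {ω | W ω = j} :=
      fun j _ => hWmeas (measurableSet_singleton j)
    have hun : (⋃ j ∈ Finset.range (n+1), {ω | W ω = j}) = {ω | W ω ≤ n} := by
      ext ω
      simp [Nat.lt_succ_iff]
    have hPun : P {ω | W ω ≤ n} = 1 := by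
      rw [← prob_compl_eq_zero_iff (by exact hWmeas measurableSet_Iic : MeasurableSet {ω | W ω ≤ n})]
      rw [Set.compl_setOf]
      exact hnullW
    have e1 : ∑ j ∈ Finset.range (n+1), P {ω | W ω = j} = 1 := by
      rw [← measure_biUnion_finset hdisj hmeasj, hun, hPun]
    have e2 : (∑ j ∈ Finset.range (n+1), P {ω | W ω = j}).toReal
        = ∑ j ∈ Finset.range (n+1), a j := by
      rw [ENNReal.toReal_sum (fun j _ => measure_ne_top P _)]
      rfl
    rw [← e2, e1]; rfl
  set A : Finset ℕ := (Finset.range (n+1)).filter (fun j => b j < a j) with hAdef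
  set h : ℕ → ℝ := fun j => if j ∈ A then 1 else 0 with hhdef
  have h0 : ∀ j, 0 ≤ h j := by intro j; rw [hhdef]; dsimp only; split <;> norm_num
  have h1 : ∀ j, h j ≤ 1 := by intro j; rw [hhdef]; dsimp only; split <;> norm_num
  have hdtv : dTV P W X = ∑ j ∈ A, (a j - b j) := by
    have hsub : Summable (fun j => a j - b j) := hasum.sub hbsum
    have htsub : ∑' j, (a j - b j) = 0 := by
      rw [Summable.tsum_sub hasum hbsum, hatsum, hbtsum]; ring
    have hmax_supp : ∀ j ∉ A, max (a j - b j) 0 = 0 := by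
      intro j hj
      rw [max_eq_right]
      by_cases hjr : j ∈ Finset.range (n+1)
      · have hnlt : ¬ b j < a j := by
          intro hlt; exact hj (Finset.mem_filter.2 ⟨hjr, hlt⟩)
        linarith [not_lt.mp hnlt]
      · have := hasupp j hjr
        linarith [hb0 j]
    have hmaxsum : Summable (fun j => max (a j - b j) 0) :=
      summable_of_ne_finset_zero hmax_supp
    have habs : ∀ j : ℕ, |a j - b j| = 2 * max (a j - b j) 0 - (a j - b j) := by
      intro j
      rcases le_total 0 (a j - b j) with hc | hc
      · rw [abs_of_nonneg hc, max_eq_left hc]; ring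
      · rw [abs_of_nonpos hc, max_eq_right hc]; ring
    have e1 : ∑' j, |a j - b j| = 2 * ∑ j ∈ A, (a j - b j) := by
      rw [tsum_congr habs,
        Summable.tsum_sub (hmaxsum.mul_left 2) hsub, htsub, tsum_mul_left,
        tsum_eq_sum hmax_supp]
      rw [sub_zero]
      congr 1
      apply Finset.sum_congr rfl
      intro j hj
      have : b j < a j := (Finset.mem_filter.mp hj).2
      rw [max_eq_left (by linarith)]
    show (1/2 : ℝ) * ∑' j, |pm P W j - pm P X j| = _
    have e0 : ∀ j : ℕ, |pm P W j - pm P X j| = |a j - b j| := by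
      intro j; rw [hbX j]
    rw [tsum_congr e0, e1]
    ring
  set f : ℕ → ℝ := steinF μ h with hfdef
  have hPh : (∑' j, h j * pois μ j) = ∑ j ∈ A, b j := by
    have hsupp : ∀ j ∉ A, h j * pois μ j = 0 := by
      intro j hj; rw [hhdef]; simp [hj]
    rw [tsum_eq_sum hsupp]
    apply Finset.sum_congr rfl
    intro j hj
    rw [hhdef, hbdef]; simp [hj]
  have hEh : ∫ ω, h (W ω) ∂P = ∑ j ∈ A, a j := by
    have hpt : (fun ω => h (W ω))
        = fun ω => ∑ j ∈ A, Set.indicator {ω' | W ω' = j} (fun _ => (1:ℝ)) ω := by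
      funext ω
      by_cases hmem : W ω ∈ A
      · rw [Finset.sum_eq_single_of_mem (W ω) hmem (by
          intro j hj hne
          apply Set.indicator_of_notMem
          simp only [Set.mem_setOf_eq]
          omega)]
        rw [Set.indicator_of_mem (show ω ∈ {ω' | W ω' = W ω} from rfl)]
        rw [hhdef]
        simp [hmem]
      · rw [hhdef]
        simp only [hmem, if_false]
        symm
        apply Finset.sum_eq_zero
        intro j hj
        apply Set.indicator_of_notMem
        simp only [Set.mem_setOf_eq]
        intro hWj
        exact hmem (hWj ▸ hj)
    rw [hpt, integral_finset_sum]
    · apply Finset.sum_congr rfl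
      intro j hj
      rw [integral_indicator_const (1:ℝ)
        (by exact hWmeas (measurableSet_singleton j) : MeasurableSet {ω' | W ω' = j}),
        smul_eq_mul, mul_one]
      rfl
    · intro j hj
      exact (integrable_const (1:ℝ)).indicator (hWmeas (measurableSet_singleton j))
  have hsteinpt : ∀ ω : Ω, h (W ω) - (∑' j, h j * pois μ j)
      = μ * f (W ω + 1) - (W ω : ℝ) * f (W ω) := by
    intro ω
    exact (stein_eq hμpos h (W ω)).symm
  have hint1 : Integrable (fun ω => f (W ω + 1)) P :=
    integrable_comp_nat P hWmeas n hWbd (fun m => f (m+1))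
  have hint2 : Integrable (fun ω => (W ω : ℝ) * f (W ω)) P :=
    integrable_comp_nat P hWmeas n hWbd (fun m => (m : ℝ) * f m)
  have hEcast : ∀ i, ∫ ω, (ξ i ω : ℝ) ∂P = p i := by
    intro i
    have hpt : ∀ᵐ ω ∂P, (ξ i ω : ℝ)
        = Set.indicator {ω' | ξ i ω' = 1} (fun _ => (1:ℝ)) ω := by
      filter_upwards [hber i] with ω hω
      rcases hω with hc | hc
      · rw [hc, Set.indicator_of_notMem (by simp [Set.mem_setOf_eq, hc])]
        simp
      · rw [hc, Set.indicator_of_mem (by simp [Set.mem_setOf_eq, hc])]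
        simp
    rw [integral_congr_ae hpt,
      integral_indicator_const (1:ℝ)
        (by exact hmeas i (measurableSet_singleton 1) : MeasurableSet {ω' | ξ i ω' = 1}),
      smul_eq_mul, mul_one]
    exact hpmf1 i
  have hmul : ∀ i (g g' : ℕ → ℝ), ∫ ω, g (ξ i ω) * g' (Wi i ω) ∂P
      = (∫ ω, g (ξ i ω) ∂P) * ∫ ω, g' (Wi i ω) ∂P :=
    fun i g g' => indep_mul_int P (hmeas i) (hWimeas i) 1 n (hxibd i) (hWibd i) (hindepi i) g g'
  have hterm1 : ∀ i, ∫ ω, (ξ i ω : ℝ) * f (W ω) ∂P = p i * ∫ ω, f (Wi i ω + 1) ∂P := by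
    intro i
    have hae : ∀ᵐ ω ∂P, (ξ i ω : ℝ) * f (W ω)
        = (fun m => (m:ℝ)) (ξ i ω) * (fun m => f (m+1)) (Wi i ω) := by
      filter_upwards [hber i] with ω hω
      rcases hω with hc | hc
      · simp [hc]
      · rw [hdecomp i ω, hc]
    rw [integral_congr_ae hae, hmul i (fun m => (m:ℝ)) (fun m => f (m+1)), hEcast i]
  have hterm2 : ∀ i, ∫ ω, f (W ω + 1) ∂P
      = (1 - p i) * (∫ ω, f (Wi i ω + 1) ∂P) + p i * ∫ ω, f (Wi i ω + 2) ∂P := by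
    intro i
    have hae : ∀ᵐ ω ∂P, f (W ω + 1)
        = (fun m => 1 - (m:ℝ)) (ξ i ω) * (fun m => f (m+1)) (Wi i ω)
          + (fun m => (m:ℝ)) (ξ i ω) * (fun m => f (m+2)) (Wi i ω) := by
      filter_upwards [hber i] with ω hω
      rcases hω with hc | hc
      · rw [hdecomp i ω, hc]
        simp
      · rw [hdecomp i ω, hc]
        simp
    rw [integral_congr_ae hae, integral_add
      (integrable_comp_nat2 P (hmeas i) (hWimeas i) 1 n (hxibd i) (hWibd i)
        (fun m => 1 - (m:ℝ)) (fun m => f (m+1)))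
      (integrable_comp_nat2 P (hmeas i) (hWimeas i) 1 n (hxibd i) (hWibd i)
        (fun m => (m:ℝ)) (fun m => f (m+2))),
      hmul i (fun m => 1 - (m:ℝ)) (fun m => f (m+1)),
      hmul i (fun m => (m:ℝ)) (fun m => f (m+2)), hEcast i]
    have e1 : ∫ ω, (fun m => 1 - (m:ℝ)) (ξ i ω) ∂P = 1 - p i := by
      have : (fun ω => (fun m => 1 - (m:ℝ)) (ξ i ω))
          = fun ω => (1 : ℝ) - (ξ i ω : ℝ) := rfl
      rw [this, integral_sub (integrable_const 1)
        (integrable_comp_nat P (hmeas i) 1 (hxibd i) (fun m => (m:ℝ))), hEcast i]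
      simp
    rw [e1]
  have hE1 : ∫ ω, (W ω : ℝ) * f (W ω) ∂P = ∑ i, p i * ∫ ω, f (Wi i ω + 1) ∂P := by
    have hpt : (fun ω => (W ω : ℝ) * f (W ω))
        = fun ω => ∑ i, (ξ i ω : ℝ) * f (W ω) := by
      funext ω
      rw [hWdef]
      push_cast
      rw [Finset.sum_mul]
    rw [hpt, integral_finset_sum]
    · exact Finset.sum_congr rfl fun i _ => hterm1 i
    · intro i _
      exact integrable_comp_nat2 P (hmeas i) hWmeas 1 n (hxibd i) hWbd (fun m => (m:ℝ)) f
  have hkey : ∑ j ∈ A, (a j - b j)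
      = ∑ i, p i ^ 2 * ((∫ ω, f (Wi i ω + 2) ∂P) - ∫ ω, f (Wi i ω + 1) ∂P) := by
    have lhs1 : ∑ j ∈ A, (a j - b j) = ∫ ω, (h (W ω) - ∑' j, h j * pois μ j) ∂P := by
      rw [integral_sub (integrable_comp_nat P hWmeas n hWbd h) (integrable_const _), hEh,
        integral_const]
      simp only [probReal_univ, one_smul]
      rw [hPh, Finset.sum_sub_distrib]
    have lhs2 : ∫ ω, (h (W ω) - ∑' j, h j * pois μ j) ∂P
        = μ * (∫ ω, f (W ω + 1) ∂P) - ∫ ω, (W ω : ℝ) * f (W ω) ∂P := by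
      rw [show (fun ω => h (W ω) - ∑' j, h j * pois μ j)
          = fun ω => μ * f (W ω + 1) - (W ω : ℝ) * f (W ω) from funext hsteinpt]
      rw [integral_sub (hint1.const_mul μ) hint2, integral_const_mul]
    rw [lhs1, lhs2, hE1, hμdef, Finset.sum_mul, ← Finset.sum_sub_distrib]
    apply Finset.sum_congr rfl
    intro i _
    rw [hterm2 i]
    ring
  have hbound : ∀ i, |(∫ ω, f (Wi i ω + 2) ∂P) - ∫ ω, f (Wi i ω + 1) ∂P|
      ≤ (1 - Real.exp (-μ))/μ := by
    intro i
    rw [← integral_sub (integrable_comp_nat P (hWimeas i) n (hWibd i) (fun m => f (m+2)))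
      (integrable_comp_nat P (hWimeas i) n (hWibd i) (fun m => f (m+1)))]
    have hpt : ∀ᵐ ω ∂P, ‖f (Wi i ω + 2) - f (Wi i ω + 1)‖ ≤ (1 - Real.exp (-μ))/μ := by
      apply Filter.Eventually.of_forall
      intro ω
      rw [Real.norm_eq_abs]
      exact stein_delta_abs hμpos h0 h1 (Wi i ω)
    have := norm_integral_le_of_norm_le_const hpt
    rw [probReal_univ, mul_one] at this
    rw [← Real.norm_eq_abs]
    exact this
  have hC : (1 - Real.exp (-μ))/μ ≤ 1 / max 1 μ := by
    rcases le_total μ 1 with hc | hc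
    · rw [max_eq_left hc]
      rw [div_le_div_iff₀ hμpos one_pos]
      have := Real.add_one_le_exp (-μ)
      nlinarith
    · rw [max_eq_right hc]
      rw [div_le_div_iff₀ hμpos hμpos]
      nlinarith [Real.exp_pos (-μ), hμpos]
  rw [hdtv, hkey]
  calc ∑ i, p i ^ 2 * ((∫ ω, f (Wi i ω + 2) ∂P) - ∫ ω, f (Wi i ω + 1) ∂P)
      ≤ ∑ i, p i ^ 2 * ((1 - Real.exp (-μ))/μ) := by
        apply Finset.sum_le_sum
        intro i _
        exact mul_le_mul_of_nonneg_left ((le_abs_self _).trans (hbound i)) (sq_nonneg _)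
    _ ≤ ∑ i, p i ^ 2 * (1 / max 1 μ) := by
        apply Finset.sum_le_sum
        intro i _
        exact mul_le_mul_of_nonneg_left hC (sq_nonneg _)
    _ = (∑ i, p i ^ 2) / max 1 μ := by
        rw [← Finset.sum_mul, mul_one_div]
end
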